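/- arXiv:1504.02052 — 7 statements merged into one kernel-verified Lean document; each statement's English description precedes it below -/
import Mathlib

section
/- Any allocation d under which all exchange ratios ρ_i are equal (hence all equal to 1) is lexicographically optimal: there is no allocation d' whose sorted exchange ratio vector is lexicographically strictly larger. -/
open Finset

noncomputable section

variable {V : Type*}

/-- An allocation: nonnegative, supported on edges, each node distributes its full endowment. -/
def IsAlloc [Fintype V] [DecidableEq V] (G : SimpleGraph V) [DecidableRel G.Adj]
    (D : V → ℝ) (d : V → V → ℝ) : Prop :=
  (∀ i j, 0 ≤ d i j) ∧ (∀ i j, ¬ G.Adj i j → d i j = 0) ∧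
  (∀ i, ∑ j ∈ G.neighborFinset i, d i j = D i)

/-- Received resource of node `i`. -/
def recv [Fintype V] [DecidableEq V] (G : SimpleGraph V) [DecidableRel G.Adj]
    (d : V → V → ℝ) (i : V) : ℝ := ∑ j ∈ G.neighborFinset i, d j i

/-- Exchange ratio of node `i`. -/
def ratio [Fintype V] [DecidableEq V] (G : SimpleGraph V) [DecidableRel G.Adj]
    (D : V → ℝ) (d : V → V → ℝ) (i : V) : ℝ := recv G d i / D i

/-- Total resource flowing into `S` from outside. -/
def inFlow [Fintype V] [DecidableEq V] (G : SimpleGraph V) [DecidableRel G.Adj]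
    (d : V → V → ℝ) (S : Finset V) : ℝ :=
  ∑ i ∈ S, ∑ j ∈ G.neighborFinset i \ S, d j i

/-- Total resource flowing out of `S`. -/
def outFlow [Fintype V] [DecidableEq V] (G : SimpleGraph V) [DecidableRel G.Adj]
    (d : V → V → ℝ) (S : Finset V) : ℝ :=
  ∑ i ∈ S, ∑ j ∈ G.neighborFinset i \ S, d i j

/-- Sorted (non-decreasing) list of exchange ratios. -/
def sortedRatios [Fintype V] [DecidableEq V] (G : SimpleGraph V) [DecidableRel G.Adj]
    (D : V → ℝ) (d : V → V → ℝ) : List ℝ :=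
  (Finset.univ.val.map (ratio G D d)).sort (· ≤ ·)

/-- Lexicographic optimality: no allocation gives a lexicographically larger sorted ratio vector. -/
def LexOpt [Fintype V] [DecidableEq V] (G : SimpleGraph V) [DecidableRel G.Adj]
    (D : V → ℝ) (d : V → V → ℝ) : Prop :=
  IsAlloc G D d ∧ ∀ d', IsAlloc G D d' →
    ¬ List.Lex (· < ·) (sortedRatios G D d) (sortedRatios G D d')

/-- Minimum exchange ratio. -/
def minRatio [Fintype V] [Nonempty V] [DecidableEq V] (G : SimpleGraph V) [DecidableRel G.Adj]
    (D : V → ℝ) (d : V → V → ℝ) : ℝ := Finset.univ.inf' Finset.univ_nonempty (ratio G D d)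

/-- Maximum exchange ratio. -/
def maxRatio [Fintype V] [Nonempty V] [DecidableEq V] (G : SimpleGraph V) [DecidableRel G.Adj]
    (D : V → ℝ) (d : V → V → ℝ) : ℝ := Finset.univ.sup' Finset.univ_nonempty (ratio G D d)

/-- The set `L₁` of nodes attaining the minimum exchange ratio. -/
def minSet [Fintype V] [Nonempty V] [DecidableEq V] (G : SimpleGraph V) [DecidableRel G.Adj]
    (D : V → ℝ) (d : V → V → ℝ) : Finset V :=
  Finset.univ.filter (fun i => ratio G D d i = minRatio G D d)

/-- The set `L_K` of nodes attaining the maximum exchange ratio. -/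
def maxSet [Fintype V] [Nonempty V] [DecidableEq V] (G : SimpleGraph V) [DecidableRel G.Adj]
    (D : V → ℝ) (d : V → V → ℝ) : Finset V :=
  Finset.univ.filter (fun i => ratio G D d i = maxRatio G D d)

/-- External neighborhood of a set of nodes. -/
def extNbhd [Fintype V] [DecidableEq V] (G : SimpleGraph V) [DecidableRel G.Adj]
    (S : Finset V) : Finset V := (S.biUnion fun i => G.neighborFinset i) \ S

lemma sum_recv_eq [Fintype V] [DecidableEq V] (G : SimpleGraph V) [DecidableRel G.Adj]
    (D : V → ℝ) (d : V → V → ℝ) (hd : IsAlloc G D d) :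
    ∑ i, recv G d i = ∑ i, D i := by
  obtain ⟨h0, hsupp, hsum⟩ := hd
  have hrecv : ∀ i, recv G d i = ∑ j, d j i := by
    intro i
    rw [recv]
    refine Finset.sum_subset (Finset.subset_univ _) ?_
    intro j _ hj
    exact hsupp j i fun hadj => hj (by simpa [SimpleGraph.mem_neighborFinset] using hadj.symm)
  have hsend : ∀ j, ∑ i, d j i = D j := by
    intro j
    rw [← hsum j]
    symm
    refine Finset.sum_subset (Finset.subset_univ _) ?_
    intro i _ hi
    exact hsupp j i fun hadj => hi (by simpa [SimpleGraph.mem_neighborFinset] using hadj)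
  simp_rw [hrecv]
  rw [Finset.sum_comm]
  simp_rw [hsend]

lemma lex_aux (l l' : List ℝ) (hlex : List.Lex (· < ·) l l') :
    (∀ x ∈ l, x = (1:ℝ)) → l'.Pairwise (· ≤ ·) → l.length = l'.length →
    (∀ x ∈ l', (1:ℝ) ≤ x) ∧ ∃ x ∈ l', (1:ℝ) < x := by
  induction hlex with
  | nil => intro _ _ hlen; simp at hlen
  | @cons a t t' hlex ih =>
    intro h1 hs hlen
    have ha : a = 1 := h1 a (by simp)
    obtain ⟨ih1, ih2⟩ := ih (fun x hx => h1 x (by simp [hx]))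
      (List.pairwise_cons.1 hs).2 (by simpa using hlen)
    refine ⟨?_, ?_⟩
    · intro x hx
      rcases List.mem_cons.1 hx with hh | hh
      · simp [hh, ha]
      · exact ih1 x hh
    · obtain ⟨x, hx, hx1⟩ := ih2
      exact ⟨x, List.mem_cons_of_mem _ hx, hx1⟩
  | @rel a t b t' hab =>
    intro h1 hs _
    have ha : a = 1 := h1 a (by simp)
    have hb : (1:ℝ) < b := ha ▸ hab
    constructor
    · intro x hx
      rcases List.mem_cons.1 hx with hh | hh
      · exact hh ▸ hb.le
      · exact hb.le.trans ((List.pairwise_cons.1 hs).1 x hh)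
    · exact ⟨b, by simp, hb⟩

theorem stmt5 [Fintype V] [Nonempty V] [DecidableEq V] (G : SimpleGraph V) [DecidableRel G.Adj]
    (hconn : G.Connected) (D : V → ℝ) (hD : ∀ i, 0 < D i) (d : V → V → ℝ)
    (hd : IsAlloc G D d) (h : ∀ i j, ratio G D d i = ratio G D d j) :
    LexOpt G D d := by
  classical
  refine ⟨hd, ?_⟩
  intro d' hd' hlex
  -- all ratios of d equal 1
  set i₀ := Classical.arbitrary V with hi₀
  have hc : ∀ i, ratio G D d i = ratio G D d i₀ := fun i => h i i₀
  have hrDi : ∀ i, recv G d i = ratio G D d i * D i := by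
    intro i; rw [ratio, div_mul_cancel₀ _ (hD i).ne']
  have hsum : ∑ i, recv G d i = ∑ i, D i := sum_recv_eq G D d hd
  have hDpos : (0:ℝ) < ∑ i, D i :=
    Finset.sum_pos (fun i _ => hD i) Finset.univ_nonempty
  have hcsum : ratio G D d i₀ * ∑ i, D i = ∑ i, D i := by
    rw [Finset.mul_sum, ← hsum]
    exact Finset.sum_congr rfl fun i _ => by rw [hrDi i, hc i]
  have hc1 : ratio G D d i₀ = 1 :=
    mul_right_cancel₀ hDpos.ne' (by rw [hcsum, one_mul])
  have hone : ∀ i, ratio G D d i = 1 := fun i => (hc i).trans hc1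
  -- all entries of sortedRatios d are 1
  have hlen : (sortedRatios G D d).length = (sortedRatios G D d').length := by
    simp [sortedRatios, Multiset.length_sort]
  have hall1 : ∀ x ∈ sortedRatios G D d, x = (1:ℝ) := by
    intro x hx
    rw [sortedRatios, Multiset.mem_sort] at hx
    obtain ⟨i, _, rfl⟩ := Multiset.mem_map.1 hx
    exact hone i
  have hsorted : (sortedRatios G D d').Pairwise (· ≤ ·) := Multiset.pairwise_sort _ _
  obtain ⟨hge, x, hx, hx1⟩ := lex_aux _ _ hlex hall1 hsorted hlen
  -- translate to ratios of d'
  have hge' : ∀ i, (1:ℝ) ≤ ratio G D d' i := by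
    intro i
    refine hge _ ?_
    rw [sortedRatios, Multiset.mem_sort]
    exact Multiset.mem_map.2 ⟨i, Finset.mem_univ_val i, rfl⟩
  obtain ⟨j, _, rfl⟩ := Multiset.mem_map.1 ((Multiset.mem_sort _).1 hx)
  have hrecvge : ∀ i, D i ≤ recv G d' i := by
    intro i
    have := hge' i
    rw [ratio, le_div_iff₀ (hD i)] at this
    linarith
  have hrecvgt : D j < recv G d' j := by
    have := hx1
    rw [ratio, lt_div_iff₀ (hD j)] at this
    linarith
  have hlt : ∑ i, D i < ∑ i, recv G d' i :=
    Finset.sum_lt_sum (fun i _ => hrecvge i) ⟨j, Finset.mem_univ j, hrecvgt⟩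
  rw [sum_recv_eq G D d' hd'] at hlt
  exact lt_irrefl _ hlt
end
end

section
/- Under a lex-optimal allocation d*, for every node i, all neighbors j of i with d*_ij > 0 have the same exchange ratio ρ*_j, and every neighbor j with d*_ij = 0 has exchange ratio at least that common value. -/
open Finset

noncomputable section

variable {V : Type*}

private lemma lex_of_counts (x : ℝ) : ∀ (l₁ l₂ : List ℝ), l₁.Pairwise (· ≤ ·) → l₂.Pairwise (· ≤ ·) →
    l₁.length = l₂.length → (∀ y, y < x → l₁.count y = l₂.count y) →
    l₂.count x < l₁.count x → List.Lex (· < ·) l₁ l₂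
  | [], _, _, _, _, _, hcx => by simp at hcx
  | _ :: _, [], _, _, hlen, _, _ => by simp at hlen
  | a :: t₁, b :: t₂, h₁, h₂, hlen, hc, hcx => by
    have hxmem : x ∈ a :: t₁ := by
      rw [← List.count_pos_iff]
      exact lt_of_le_of_lt (Nat.zero_le _) hcx
    have hax : a ≤ x := by
      rcases List.mem_cons.mp hxmem with h | h
      · exact le_of_eq h.symm
      · exact List.rel_of_pairwise_cons h₁ h
    rcases lt_trichotomy a b with hab | hab | hab
    · exact List.Lex.rel hab
    · subst hab
      refine List.Lex.cons (lex_of_counts x t₁ t₂ h₁.of_cons h₂.of_cons (by simpa using hlen) ?_ ?_)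
      · intro y hy
        have h := hc y hy
        by_cases hya : y = a <;> simp [List.count_cons, hya] at h ⊢ <;> omega
      · have h := hcx
        by_cases hxa : x = a <;> simp [List.count_cons, hxa] at h ⊢ <;> omega
    · exfalso
      have hbx : b < x := lt_of_lt_of_le hab hax
      have hcb := hc b hbx
      have hbmem : b ∈ a :: t₁ := by
        rw [← List.count_pos_iff, hcb, List.count_pos_iff]
        exact List.mem_cons_self
      have : a ≤ b := by
        rcases List.mem_cons.mp hbmem with h | h
        · exact le_of_eq h.symm
        · exact List.rel_of_pairwise_cons h₁ h
      exact absurd hab (not_lt.mpr this)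

private lemma ratio_key [Fintype V] [Nonempty V] [DecidableEq V] (G : SimpleGraph V)
    [DecidableRel G.Adj] (D : V → ℝ) (hD : ∀ i, 0 < D i) (d : V → V → ℝ)
    (hopt : LexOpt G D d) (i j k : V) (hij : G.Adj i j) (hik : G.Adj i k)
    (hdij : 0 < d i j) : ratio G D d j ≤ ratio G D d k := by
  by_contra hlt
  push_neg at hlt
  have hjk : j ≠ k := by rintro rfl; exact lt_irrefl _ hlt
  obtain ⟨⟨hnn, hsupp, hsum⟩, hmax⟩ := hopt
  have hijne : i ≠ j := hij.ne
  have hikne : i ≠ k := hik.ne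
  set ρ : V → ℝ := ratio G D d with hρ
  set ε : ℝ := min (d i j) ((ρ j - ρ k) * D j / 2) with hεdef
  have hsub : 0 < ρ j - ρ k := sub_pos.mpr hlt
  have hε0 : 0 < ε := lt_min hdij (div_pos (mul_pos hsub (hD j)) two_pos)
  have hε1 : ε ≤ d i j := min_le_left _ _
  have hε2 : ε / D j < ρ j - ρ k := by
    rw [div_lt_iff₀ (hD j)]
    calc ε ≤ (ρ j - ρ k) * D j / 2 := min_le_right _ _
    _ < (ρ j - ρ k) * D j := by nlinarith [hD j]
  set f : V → ℝ := Function.update (Function.update (d i) j (d i j - ε)) k (d i k + ε) with hfdef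
  set d' : V → V → ℝ := Function.update d i f with hd'def
  have hfj : f j = d i j - ε := by simp [hfdef, Function.update, hjk]
  have hfk : f k = d i k + ε := by simp [hfdef]
  have hfother : ∀ b, b ≠ j → b ≠ k → f b = d i b := by
    intro b h1 h2; simp [hfdef, Function.update, h1, h2]
  have hd'i : ∀ b, d' i b = f b := by intro b; simp [hd'def]
  have hd'ne : ∀ a b, a ≠ i → d' a b = d a b := by
    intro a b ha; simp [hd'def, Function.update, ha]
  -- d' is an allocation
  have halloc' : IsAlloc G D d' := by
    refine ⟨?_, ?_, ?_⟩
    · intro a b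
      by_cases ha : a = i
      · rw [ha, hd'i]
        by_cases hb : b = j
        · rw [hb, hfj]; linarith
        · by_cases hb2 : b = k
          · rw [hb2, hfk]; have := hnn i k; linarith
          · rw [hfother b hb hb2]; exact hnn i b
      · rw [hd'ne a b ha]; exact hnn a b
    · intro a b hnadj
      by_cases ha : a = i
      · rw [ha, hd'i]
        by_cases hb : b = j
        · exact absurd (hb ▸ hij) (ha ▸ hnadj)
        · by_cases hb2 : b = k
          · exact absurd (hb2 ▸ hik) (ha ▸ hnadj)
          · rw [hfother b hb hb2]; exact hsupp i b (ha ▸ hnadj)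
      · rw [hd'ne a b ha]; exact hsupp a b hnadj
    · intro a
      by_cases ha : a = i
      · rw [ha]
        have hjmem : j ∈ G.neighborFinset i := by simpa using hij
        have hkmem : k ∈ G.neighborFinset i := by simpa using hik
        have hjmem' : j ∈ (G.neighborFinset i).erase k := Finset.mem_erase.mpr ⟨hjk, hjmem⟩
        have e1 : ∑ b ∈ G.neighborFinset i, d' i b = ∑ b ∈ G.neighborFinset i, f b :=
          Finset.sum_congr rfl fun b _ => hd'i b
        have e2 : ∑ b ∈ G.neighborFinset i, f b
            = (d i k + ε) + ((d i j - ε)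
              + ∑ b ∈ ((G.neighborFinset i).erase k).erase j, d i b) := by
          rw [hfdef, Finset.sum_update_of_mem hkmem, Finset.sdiff_singleton_eq_erase,
            Finset.sum_update_of_mem hjmem', Finset.sdiff_singleton_eq_erase]
        have e3 : ∑ b ∈ G.neighborFinset i, d i b
            = d i k + (d i j + ∑ b ∈ ((G.neighborFinset i).erase k).erase j, d i b) := by
          rw [← Finset.add_sum_erase _ _ hkmem, ← Finset.add_sum_erase _ _ hjmem']
        have h4 := hsum i
        rw [e3] at h4
        rw [e1, e2]
        linarith
      · rw [Finset.sum_congr rfl fun b _ => hd'ne a b ha]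
        exact hsum a
  -- recv computations
  have hrecv : ∀ m, m ≠ j → m ≠ k → recv G d' m = recv G d m := by
    intro m h1 h2
    refine Finset.sum_congr rfl fun l _ => ?_
    by_cases hl : l = i
    · subst hl; rw [hd'i, hfother m h1 h2]
    · exact hd'ne l m hl
  have himemj : i ∈ G.neighborFinset j := by simpa using hij.symm
  have himemk : i ∈ G.neighborFinset k := by simpa using hik.symm
  have hrecvj : recv G d' j = recv G d j - ε := by
    unfold recv
    rw [← Finset.add_sum_erase _ _ himemj, ← Finset.add_sum_erase _ (fun l => d l j) himemj]
    rw [hd'i, hfj]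
    have : ∑ l ∈ (G.neighborFinset j).erase i, d' l j
        = ∑ l ∈ (G.neighborFinset j).erase i, d l j := by
      refine Finset.sum_congr rfl fun l hl => hd'ne l j (Finset.mem_erase.mp hl).1
    rw [this]; ring
  have hrecvk : recv G d' k = recv G d k + ε := by
    unfold recv
    rw [← Finset.add_sum_erase _ _ himemk, ← Finset.add_sum_erase _ (fun l => d l k) himemk]
    rw [hd'i, hfk]
    have : ∑ l ∈ (G.neighborFinset k).erase i, d' l k
        = ∑ l ∈ (G.neighborFinset k).erase i, d l k := by
      refine Finset.sum_congr rfl fun l hl => hd'ne l k (Finset.mem_erase.mp hl).1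
    rw [this]; ring
  -- ratio computations
  set ρ' : V → ℝ := ratio G D d' with hρ'
  have hρ'j : ρ' j = ρ j - ε / D j := by
    rw [hρ', hρ]; unfold ratio; rw [hrecvj]; ring
  have hρ'k : ρ' k = ρ k + ε / D k := by
    rw [hρ', hρ]; unfold ratio; rw [hrecvk]; ring
  have hρ'other : ∀ m, m ≠ j → m ≠ k → ρ' m = ρ m := by
    intro m h1 h2; rw [hρ', hρ]; unfold ratio; rw [hrecv m h1 h2]
  -- key value facts
  set x : ℝ := ρ k with hx
  have hxj : x < ρ j := hlt
  have hxj' : x < ρ' j := by rw [hρ'j]; linarith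
  have hxk' : x < ρ' k := by
    rw [hρ'k]; have : 0 < ε / D k := div_pos hε0 (hD k)
    linarith
  -- multiset decomposition
  have hjmemu : j ∈ (Finset.univ : Finset V).val := Finset.mem_univ_val j
  have hkmemu : k ∈ (Finset.univ : Finset V).val.erase j := by
    rw [Multiset.mem_erase_of_ne (Ne.symm hjk)]; exact Finset.mem_univ_val k
  set S : Finset V := ((Finset.univ : Finset V).erase j).erase k with hS
  set R : Multiset V := S.val with hR
  have hRval : R = ((Finset.univ : Finset V).val.erase j).erase k := by
    rw [hR, hS]; simp [Finset.erase_val]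
  have hdecomp : (Finset.univ : Finset V).val = j ::ₘ k ::ₘ R := by
    rw [hRval, Multiset.cons_erase hkmemu, Multiset.cons_erase hjmemu]
  have hRnotj : j ∉ R := by
    rw [hR]; intro h
    exact Finset.notMem_erase j _ (Finset.mem_of_mem_erase h)
  have hRnotk : k ∉ R := by rw [hR]; exact Finset.notMem_erase k _
  have hmapR : Multiset.map ρ' R = Multiset.map ρ R := by
    refine Multiset.map_congr rfl fun m hm => ?_
    exact hρ'other m (fun h => hRnotj (h ▸ hm)) (fun h => hRnotk (h ▸ hm))
  -- counts of sorted ratio lists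
  have hcount : ∀ v : ℝ, (sortedRatios G D d).count v
      = Multiset.count v (Multiset.map ρ (Finset.univ : Finset V).val) := by
    intro v
    rw [sortedRatios, ← Multiset.coe_count, Multiset.sort_eq]
  have hcount' : ∀ v : ℝ, (sortedRatios G D d').count v
      = Multiset.count v (Multiset.map ρ' (Finset.univ : Finset V).val) := by
    intro v
    rw [sortedRatios, ← Multiset.coe_count, Multiset.sort_eq]
  have hcnt : ∀ v : ℝ, Multiset.count v (Multiset.map ρ (Finset.univ : Finset V).val)
      = Multiset.count v (Multiset.map ρ R) + (if v = ρ j then 1 else 0)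
        + (if v = ρ k then 1 else 0) := by
    intro v
    rw [hdecomp]
    simp [Multiset.count_cons]
    ring
  have hcnt' : ∀ v : ℝ, Multiset.count v (Multiset.map ρ' (Finset.univ : Finset V).val)
      = Multiset.count v (Multiset.map ρ R) + (if v = ρ' j then 1 else 0)
        + (if v = ρ' k then 1 else 0) := by
    intro v
    rw [hdecomp]
    simp [Multiset.count_cons, hmapR]
    ring
  -- apply lex_of_counts
  have hlex : List.Lex (· < ·) (sortedRatios G D d) (sortedRatios G D d') := by
    refine lex_of_counts x _ _ (Multiset.pairwise_sort _ _) (Multiset.pairwise_sort _ _) ?_ ?_ ?_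
    · rw [sortedRatios, sortedRatios, Multiset.length_sort, Multiset.length_sort,
        Multiset.card_map, Multiset.card_map]
    · intro y hy
      rw [hcount, hcount', hcnt, hcnt']
      have h1 : y ≠ ρ j := ne_of_lt (lt_trans hy hxj)
      have h2 : y ≠ ρ k := ne_of_lt hy
      have h3 : y ≠ ρ' j := ne_of_lt (lt_trans hy hxj')
      have h4 : y ≠ ρ' k := ne_of_lt (lt_trans hy hxk')
      simp [h1, h2, h3, h4]
    · rw [hcount, hcount', hcnt, hcnt']
      have h1 : x ≠ ρ j := ne_of_lt hxj
      have h2 : x = ρ k := hx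
      have h3 : x ≠ ρ' j := ne_of_lt hxj'
      have h4 : x ≠ ρ' k := ne_of_lt hxk'
      rw [if_neg h1, if_neg h3, if_neg h4, if_pos h2]; omega
  exact hmax d' halloc' hlex

theorem stmt6 [Fintype V] [Nonempty V] [DecidableEq V] (G : SimpleGraph V) [DecidableRel G.Adj]
    (hconn : G.Connected) (D : V → ℝ) (hD : ∀ i, 0 < D i) (d : V → V → ℝ)
    (hopt : LexOpt G D d) :
    (∀ i j k, G.Adj i j → G.Adj i k → 0 < d i j → 0 < d i k →
      ratio G D d j = ratio G D d k) ∧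
    (∀ i j k, G.Adj i j → G.Adj i k → 0 < d i j → d i k = 0 →
      ratio G D d j ≤ ratio G D d k) := by
  constructor
  · intro i j k hij hik hdij hdik
    exact le_antisymm (ratio_key G D hD d hopt i j k hij hik hdij)
      (ratio_key G D hD d hopt i k j hik hij hdik)
  · intro i j k hij hik hdij _
    exact ratio_key G D hD d hopt i j k hij hik hdij
end
end

section
/- Under a lex-optimal allocation with at least two distinct exchange ratio levels, the set L_1 of nodes with the minimum exchange ratio is an independent set in the graph G (no two nodes of L_1 are adjacent). -/
open Finset

noncomputable section

variable {V : Type*}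

lemma lex_aux_s7 {c : ℝ} : ∀ (l₁ l₂ : List ℝ), l₁.Pairwise (· ≤ ·) → l₂.Pairwise (· ≤ ·) →
    l₁.length = l₂.length → (∀ x ∈ l₁, c ≤ x) → (∀ x ∈ l₂, c ≤ x) →
    l₂.count c < l₁.count c → List.Lex (· < ·) l₁ l₂ := by
  intro l₁
  induction l₁ with
  | nil => intro l₂ _ _ _ _ _ h; simp at h
  | cons a t₁ ih =>
    intro l₂ hs₁ hs₂ hlen hc₁ hc₂ hcount
    cases l₂ with
    | nil => simp at hlen
    | cons b t₂ =>
      have hac : a = c := by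
        have hmem : c ∈ a :: t₁ := by
          refine List.count_pos_iff.mp ?_
          omega
        rcases List.mem_cons.mp hmem with h | h
        · exact h.symm
        · exact le_antisymm (List.rel_of_pairwise_cons hs₁ h) (hc₁ a (by simp))
      have hbc : c ≤ b := hc₂ b (by simp)
      rcases lt_or_eq_of_le hbc with h | h
      · exact List.Lex.rel (hac ▸ h)
      · refine hac ▸ h ▸ List.Lex.cons ?_
        apply ih t₂ hs₁.of_cons hs₂.of_cons (by simpa using hlen)
          (fun x hx => hc₁ x (by simp [hx])) (fun x hx => hc₂ x (by simp [hx]))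
        rw [List.count_cons, List.count_cons] at hcount
        simp [hac, ← h] at hcount
        omega

section props
variable [Fintype V] [DecidableEq V] (G : SimpleGraph V) [DecidableRel G.Adj]
  (D : V → ℝ) (d : V → V → ℝ)

lemma sortedRatios_sorted : (sortedRatios G D d).Pairwise (· ≤ ·) :=
  Multiset.pairwise_sort _ _

lemma sortedRatios_length : (sortedRatios G D d).length = Fintype.card V := by
  simp [sortedRatios]

lemma sortedRatios_count (c : ℝ) :
    (sortedRatios G D d).count c = (univ.filter (fun i => ratio G D d i = c)).card := by
  classical
  have h1 : (sortedRatios G D d).count c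
      = Multiset.count c (Finset.univ.val.map (ratio G D d)) := by
    rw [sortedRatios, ← Multiset.coe_count, Multiset.sort_eq]
  rw [h1, Multiset.count_map]
  have h2 : (univ.filter (fun i => ratio G D d i = c))
      = (univ.filter (fun i => c = ratio G D d i)) := by
    ext i; simp [eq_comm]
  rw [h2]
  rfl

lemma sortedRatios_mem {x : ℝ} (hx : x ∈ sortedRatios G D d) : ∃ i, ratio G D d i = x := by
  have : x ∈ Finset.univ.val.map (ratio G D d) := (Multiset.mem_sort _).mp hx
  simpa using (Multiset.mem_map.mp this).imp (fun i h => h.2)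

/-- symmetric internal sums agree -/
lemma pair_swap (R : Finset V) :
    ∑ x ∈ R, ∑ y ∈ G.neighborFinset x ∩ R, d x y
      = ∑ x ∈ R, ∑ y ∈ G.neighborFinset x ∩ R, d y x := by
  have key : ∀ f : V → V → ℝ, ∑ x ∈ R, ∑ y ∈ G.neighborFinset x ∩ R, f x y
      = ∑ x ∈ R, ∑ y ∈ R, if G.Adj x y then f x y else 0 := by
    intro f
    refine Finset.sum_congr rfl (fun x _ => ?_)
    rw [← Finset.sum_filter]
    congr 1
    ext y
    simp [SimpleGraph.mem_neighborFinset, and_comm]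
  rw [key, key, Finset.sum_comm]
  refine Finset.sum_congr rfl (fun x _ => Finset.sum_congr rfl (fun y _ => ?_))
  exact if_congr (G.adj_comm _ _) rfl rfl

lemma flow_diff {G : SimpleGraph V} [DecidableRel G.Adj] {D : V → ℝ} {d : V → V → ℝ}
    (hd : IsAlloc G D d) (R : Finset V) :
    outFlow G d R - inFlow G d R = ∑ x ∈ R, D x - ∑ x ∈ R, recv G d x := by
  have hsplit : ∀ (f : V → V → ℝ), ∀ x : V,
      ∑ y ∈ G.neighborFinset x, f x y
        = ∑ y ∈ G.neighborFinset x ∩ R, f x y + ∑ y ∈ G.neighborFinset x \ R, f x y := by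
    intro f x
    exact (Finset.sum_inter_add_sum_sdiff _ _ _).symm
  have hD : ∑ x ∈ R, D x
      = ∑ x ∈ R, ∑ y ∈ G.neighborFinset x ∩ R, d x y + outFlow G d R := by
    rw [outFlow, ← Finset.sum_add_distrib]
    refine Finset.sum_congr rfl (fun x _ => ?_)
    rw [← hd.2.2 x, hsplit (fun a b => d a b) x]
  have hR : ∑ x ∈ R, recv G d x
      = ∑ x ∈ R, ∑ y ∈ G.neighborFinset x ∩ R, d y x + inFlow G d R := by
    rw [inFlow, ← Finset.sum_add_distrib]
    refine Finset.sum_congr rfl (fun x _ => ?_)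
    rw [recv, hsplit (fun a b => d b a) x]
  rw [hD, hR, pair_swap]
  ring

end props

section improve
variable [Fintype V] [Nonempty V] [DecidableEq V] (G : SimpleGraph V) [DecidableRel G.Adj]
  (D : V → ℝ) (d : V → V → ℝ)

lemma minRatio_le (i : V) : minRatio G D d ≤ ratio G D d i :=
  Finset.inf'_le _ (mem_univ i)

lemma improve {G : SimpleGraph V} [DecidableRel G.Adj] {D : V → ℝ} {d : V → V → ℝ}
    (hd : IsAlloc G D d) (hD : ∀ i, 0 < D i) {u v w : V}
    (huv : G.Adj u v) (huw : G.Adj u w) (hvw : v ≠ w) (hduw : 0 < d u w)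
    (hv : ratio G D d v = minRatio G D d) (hw : minRatio G D d < ratio G D d w) :
    ∃ d', IsAlloc G D d' ∧ List.Lex (· < ·) (sortedRatios G D d) (sortedRatios G D d') := by
  classical
  set c := minRatio G D d with hc
  set ε := min (d u w) (D w * (ratio G D d w - c)) / 2 with hε
  have hmin : 0 < min (d u w) (D w * (ratio G D d w - c)) :=
    lt_min hduw (mul_pos (hD w) (sub_pos.mpr hw))
  have hε0 : 0 < ε := by positivity
  have hεuw : ε < d u w := by
    calc ε ≤ d u w / 2 := by
            rw [hε]; exact div_le_div_of_nonneg_right (min_le_left _ _) (by norm_num)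
      _ < d u w := by linarith
  have hεw : ε / D w < ratio G D d w - c := by
    have h1 : ε ≤ D w * (ratio G D d w - c) / 2 := by
      rw [hε]; exact div_le_div_of_nonneg_right (min_le_right _ _) (by norm_num)
    rw [div_lt_iff₀ (hD w)]
    calc ε ≤ D w * (ratio G D d w - c) / 2 := h1
      _ < D w * (ratio G D d w - c) := by linarith [mul_pos (hD w) (sub_pos.mpr hw)]
      _ = (ratio G D d w - c) * D w := by ring
  set d' : V → V → ℝ := fun p q =>
    if p = u ∧ q = v then d p q + ε else if p = u ∧ q = w then d p q - ε else d p q with hd'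
  have hd'uv : d' u v = d u v + ε := by simp [hd']
  have hd'uw : d' u w = d u w - ε := by simp [hd', hvw.symm]
  have hd'other : ∀ p q, ¬(p = u ∧ (q = v ∨ q = w)) → d' p q = d p q := by
    intro p q h
    simp only [hd']
    rw [if_neg, if_neg] <;> tauto
  -- d' is an allocation
  have halloc' : IsAlloc G D d' := by
    refine ⟨?_, ?_, ?_⟩
    · intro p q
      by_cases h1 : p = u ∧ q = v
      · rw [h1.1, h1.2, hd'uv]; linarith [hd.1 u v]
      · by_cases h2 : p = u ∧ q = w
        · rw [h2.1, h2.2, hd'uw]; linarith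
        · rw [hd'other p q (by tauto)]; exact hd.1 p q
    · intro p q hne
      by_cases h1 : p = u ∧ q = v
      · exact absurd (h1.1 ▸ h1.2 ▸ huv) hne
      · by_cases h2 : p = u ∧ q = w
        · exact absurd (h2.1 ▸ h2.2 ▸ huw) hne
        · rw [hd'other p q (by tauto)]; exact hd.2.1 p q hne
    · intro p
      have hsum_u : ∑ q ∈ G.neighborFinset u, d' u q = D u := by
        have step : ∀ q ∈ G.neighborFinset u, d' u q
            = d u q + (if q = v then ε else 0) - (if q = w then ε else 0) := by
          intro q _
          by_cases h1 : q = v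
          · rw [h1, hd'uv, if_pos rfl, if_neg hvw]; ring
          · by_cases h2 : q = w
            · rw [h2, hd'uw, if_neg (Ne.symm hvw), if_pos rfl]; ring
            · rw [hd'other u q (by tauto), if_neg h1, if_neg h2]; ring
        rw [Finset.sum_congr rfl step, Finset.sum_sub_distrib, Finset.sum_add_distrib,
          Finset.sum_ite_eq' (G.neighborFinset u) v (fun _ => ε),
          Finset.sum_ite_eq' (G.neighborFinset u) w (fun _ => ε),
          if_pos (by simpa using huv), if_pos (by simpa using huw)]
        rw [hd.2.2 u]; ring
      by_cases hp : p = u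
      · rw [hp]; exact hsum_u
      · rw [← hd.2.2 p]
        refine Finset.sum_congr rfl (fun q _ => hd'other p q (by tauto))
  -- recv changes
  have hrecv_other : ∀ x, x ≠ v → x ≠ w → recv G d' x = recv G d x := by
    intro x hxv hxw
    refine Finset.sum_congr rfl (fun y _ => hd'other y x (by tauto))
  have hrecv_v : recv G d' v = recv G d v + ε := by
    have step : ∀ y ∈ G.neighborFinset v, d' y v = d y v + (if y = u then ε else 0) := by
      intro y _
      by_cases h1 : y = u
      · rw [h1, hd'uv, if_pos rfl]
      · rw [hd'other y v (by tauto), if_neg h1]; ring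
    rw [recv, Finset.sum_congr rfl step, Finset.sum_add_distrib,
      Finset.sum_ite_eq' (G.neighborFinset v) u (fun _ => ε),
      if_pos (by simpa using huv.symm)]
    rfl
  have hrecv_w : recv G d' w = recv G d w - ε := by
    have step : ∀ y ∈ G.neighborFinset w, d' y w = d y w - (if y = u then ε else 0) := by
      intro y _
      by_cases h1 : y = u
      · rw [h1, hd'uw, if_pos rfl]
      · rw [hd'other y w (by simp [h1]), if_neg h1]; ring
    rw [recv, Finset.sum_congr rfl step, Finset.sum_sub_distrib,
      Finset.sum_ite_eq' (G.neighborFinset w) u (fun _ => ε),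
      if_pos (by simpa using huw.symm)]
    rfl
  -- ratio changes
  have hratio_other : ∀ x, x ≠ v → x ≠ w → ratio G D d' x = ratio G D d x := by
    intro x h1 h2; rw [ratio, ratio, hrecv_other x h1 h2]
  have hratio_v : ratio G D d' v = c + ε / D v := by
    rw [ratio, hrecv_v, add_div, ← ratio, hv]
  have hratio_w : ratio G D d' w = ratio G D d w - ε / D w := by
    rw [ratio, hrecv_w, sub_div, ← ratio]
  refine ⟨d', halloc', ?_⟩
  -- all new ratios are ≥ c, with v strictly above and w strictly above
  have hεv : 0 < ε / D v := div_pos hε0 (hD v)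
  have hεDw : 0 < ε / D w := div_pos hε0 (hD w)
  have hge : ∀ x, c ≤ ratio G D d' x := by
    intro x
    by_cases h1 : x = v
    · rw [h1, hratio_v]; linarith
    · by_cases h2 : x = w
      · rw [h2, hratio_w]; linarith
      · rw [hratio_other x h1 h2]; exact minRatio_le G D d x
  have hnew : ∀ x, ratio G D d' x = c ↔ (ratio G D d x = c ∧ x ≠ v) := by
    intro x
    by_cases h1 : x = v
    · rw [h1, hratio_v]
      constructor
      · intro h; linarith
      · intro h; exact absurd rfl h.2
    · by_cases h2 : x = w
      · rw [h2, hratio_w]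
        constructor
        · intro h; linarith
        · intro h; linarith [h.1, hw]
      · rw [hratio_other x h1 h2]; tauto
  -- counting
  have hvF : v ∈ univ.filter (fun x => ratio G D d x = c) := by
    simp only [mem_filter, mem_univ, true_and]; exact hv
  have hfilter : univ.filter (fun x => ratio G D d' x = c)
      = (univ.filter (fun x => ratio G D d x = c)).erase v := by
    ext x
    simp only [mem_filter, mem_univ, true_and, mem_erase]
    rw [hnew x]; tauto
  have hcount : (sortedRatios G D d').count c < (sortedRatios G D d).count c := by
    rw [sortedRatios_count, sortedRatios_count, hfilter]
    exact Finset.card_erase_lt_of_mem hvF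
  exact lex_aux_s7 _ _ (sortedRatios_sorted G D d) (sortedRatios_sorted G D d')
    (by rw [sortedRatios_length, sortedRatios_length])
    (fun x hx => by obtain ⟨i, hi⟩ := sortedRatios_mem G D d hx; rw [← hi]; exact minRatio_le G D d i)
    (fun x hx => by obtain ⟨i, hi⟩ := sortedRatios_mem G D d' hx; rw [← hi]; exact hge i)
    hcount

end improve

theorem stmt7 [Fintype V] [Nonempty V] [DecidableEq V] (G : SimpleGraph V) [DecidableRel G.Adj]
    (hconn : G.Connected) (D : V → ℝ) (hD : ∀ i, 0 < D i) (d : V → V → ℝ)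
    (hopt : LexOpt G D d) (hK : ∃ i j, ratio G D d i ≠ ratio G D d j) :
    ∀ i ∈ minSet G D d, ∀ j ∈ minSet G D d, ¬ G.Adj i j := by
  classical
  intro i hi j hj hadj
  obtain ⟨halloc, hopt2⟩ := hopt
  set c := minRatio G D d with hc
  have hcons : ∑ x ∈ univ, recv G d x = ∑ x ∈ (univ : Finset V), D x := by
    have hd := flow_diff halloc (univ : Finset V)
    have huniv : ∀ t : Finset V, t \ (univ : Finset V) = ∅ := by
      intro t; ext a; simp
    have hout : outFlow G d (univ : Finset V) = 0 := by
      simp [outFlow, huniv]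
    have hin : inFlow G d (univ : Finset V) = 0 := by
      simp [inFlow, huniv]
    rw [hout, hin] at hd
    linarith
  have hc1 : c < 1 := by
    by_contra h
    push_neg at h
    have hall : ∀ x ∈ (univ : Finset V), D x ≤ recv G d x := by
      intro x _
      have h2 : 1 ≤ ratio G D d x := le_trans h (minRatio_le G D d x)
      have h3 := (le_div_iff₀ (hD x)).mp h2
      rw [ratio] at h2
      nlinarith [(le_div_iff₀ (hD x)).mp h2]
    have heq : ∀ x ∈ (univ : Finset V), D x = recv G d x :=
      (Finset.sum_eq_sum_iff_of_le hall).mp hcons.symm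
    obtain ⟨a, b, hab⟩ := hK
    have hone : ∀ x, ratio G D d x = 1 := by
      intro x
      rw [ratio, ← heq x (mem_univ x)]
      exact div_self (ne_of_gt (hD x))
    exact hab (by rw [hone, hone])
  set S := minSet G D d with hS
  have hSmem : ∀ x, x ∈ S ↔ ratio G D d x = c := by
    intro x; simp [hS, minSet, hc]
  set rel : V → V → Prop := fun x y => x ∈ S ∧ y ∈ S ∧ 0 < d x y with hrel
  set R : Finset V := univ.filter (fun x => Relation.ReflTransGen rel j x) with hR
  have hRmem : ∀ x, x ∈ R ↔ Relation.ReflTransGen rel j x := by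
    intro x; simp [hR]
  have hjR : j ∈ R := (hRmem j).mpr Relation.ReflTransGen.refl
  have hRS : ∀ x ∈ R, x ∈ S := by
    intro x hx
    rcases ((hRmem x).mp hx).cases_tail with h | ⟨p, _, hp⟩
    · rw [h]; exact hj
    · exact hp.2.1
  have hRne : R.Nonempty := ⟨j, hjR⟩
  have hsum : ∑ x ∈ R, recv G d x = c * ∑ x ∈ R, D x := by
    rw [Finset.mul_sum]
    refine Finset.sum_congr rfl (fun x hx => ?_)
    have hx' := (hSmem x).mp (hRS x hx)
    have hrx : ratio G D d x * D x = recv G d x := by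
      rw [ratio]; exact div_mul_cancel₀ _ (ne_of_gt (hD x))
    rw [← hrx, hx']
  have hDpos : 0 < ∑ x ∈ R, D x := Finset.sum_pos (fun x _ => hD x) hRne
  have hdiff := flow_diff halloc R
  have hin : 0 ≤ inFlow G d R :=
    Finset.sum_nonneg (fun x _ => Finset.sum_nonneg (fun y _ => halloc.1 y x))
  have hout : 0 < outFlow G d R := by
    have h1 : 0 < (1 - c) * ∑ x ∈ R, D x := mul_pos (by linarith) hDpos
    nlinarith [hsum, hdiff]
  obtain ⟨x, hxR, hx⟩ : ∃ x ∈ R, 0 < ∑ y ∈ G.neighborFinset x \ R, d x y := by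
    by_contra h
    push_neg at h
    have : outFlow G d R ≤ 0 := Finset.sum_nonpos h
    linarith
  obtain ⟨y, hyN, hy⟩ : ∃ y ∈ G.neighborFinset x \ R, 0 < d x y := by
    by_contra h
    push_neg at h
    have : ∑ y ∈ G.neighborFinset x \ R, d x y ≤ 0 := Finset.sum_nonpos h
    linarith
  have hyNx : y ∈ G.neighborFinset x := (Finset.mem_sdiff.mp hyN).1
  have hyR : y ∉ R := (Finset.mem_sdiff.mp hyN).2
  have hyS : y ∉ S := by
    intro hyS
    exact hyR ((hRmem y).mpr (((hRmem x).mp hxR).tail ⟨hRS x hxR, hyS, hy⟩))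
  have hyc : c < ratio G D d y :=
    lt_of_le_of_ne (minRatio_le G D d y) (fun h => hyS ((hSmem y).mpr h.symm))
  have hAdjxy : G.Adj x y := by rwa [SimpleGraph.mem_neighborFinset] at hyNx
  obtain ⟨d', hd'alloc, hlex⟩ : ∃ d', IsAlloc G D d' ∧
      List.Lex (· < ·) (sortedRatios G D d) (sortedRatios G D d') := by
    rcases ((hRmem x).mp hxR).cases_tail with hxj | ⟨p, _, hp⟩
    · rw [hxj] at hAdjxy hy
      exact improve halloc hD (u := j) (v := i) (w := y) hadj.symm hAdjxy
        (fun h => hyS (h ▸ hi)) hy ((hSmem i).mp hi) hyc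
    · have hAdjxp : G.Adj x p := by
        by_contra hn
        have hz := halloc.2.1 p x (fun h => hn h.symm)
        have h22 : 0 < d p x := hp.2.2
        rw [hz] at h22
        exact lt_irrefl 0 h22
      exact improve halloc hD (u := x) (v := p) (w := y) hAdjxp hAdjxy
        (fun h => hyS (h ▸ hp.1)) hy ((hSmem p).mp hp.1) hyc
  exact hopt2 d' hd'alloc hlex
end
end

section
/- Under a lex-optimal allocation with at least two distinct exchange ratio levels, the minimum level l_1 and the maximum level l_K satisfy l_1 · l_K = 1. -/
open Finset

noncomputable section

variable {V : Type*}

lemma lex_of_count : ∀ (s t : List ℝ), s.Pairwise (· ≤ ·) → t.Pairwise (· ≤ ·) →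
    s.length = t.length → ∀ v : ℝ, (∀ x, x < v → s.count x = t.count x) →
    t.count v < s.count v → List.Lex (· < ·) s t := by
  intro s
  induction s with
  | nil => intro t _ _ _ v _ hv; simp at hv
  | cons x s' ih =>
    intro t hs ht hlen v hlt hv
    cases t with
    | nil => simp at hlen
    | cons y t' =>
      rw [List.pairwise_cons] at hs ht
      have hxv : x ≤ v := by
        have hvmem : v ∈ x :: s' := List.count_pos_iff.mp (by omega)
        rcases List.mem_cons.mp hvmem with h | h
        · exact le_of_eq h.symm
        · exact hs.1 v h
      rcases lt_or_eq_of_le hxv with hx | hx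
      · -- x < v
        have hcx : (x :: s').count x = (y :: t').count x := hlt x hx
        have hxt : x ∈ y :: t' := by
          rw [← List.count_pos_iff, ← hcx]
          simp [List.count_cons_self]
        have hyx : y ≤ x := by
          rcases List.mem_cons.mp hxt with h | h
          · exact le_of_eq h.symm
          · exact ht.1 x h
        have hyv : y < v := lt_of_le_of_lt hyx hx
        have hcy : (x :: s').count y = (y :: t').count y := hlt y hyv
        have hys : y ∈ x :: s' := by
          rw [← List.count_pos_iff, hcy]
          simp [List.count_cons_self]
        have hxy : x ≤ y := by
          rcases List.mem_cons.mp hys with h | h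
          · exact le_of_eq h.symm
          · exact hs.1 y h
        have hxey : x = y := le_antisymm hxy hyx
        subst hxey
        apply List.Lex.cons
        apply ih t' hs.2 ht.2 (by simpa using hlen) v
        · intro z hz
          have := hlt z hz
          simp [List.count_cons] at this
          omega
        · have hxvne : x ≠ v := ne_of_lt hx
          have := hv
          simp [List.count_cons, hxvne] at this ⊢
          omega
      · -- x = v
        rcases lt_trichotomy y x with hy | hy | hy
        · exfalso
          have hyv : y < v := hx ▸ hy
          have hcy : (x :: s').count y = (y :: t').count y := hlt y hyv
          have hys : y ∈ x :: s' := by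
            rw [← List.count_pos_iff, hcy]
            simp [List.count_cons_self]
          rcases List.mem_cons.mp hys with h | h
          · exact absurd h (ne_of_lt hy)
          · exact absurd (hs.1 y h) (not_le_of_gt hy)
        · subst hy
          apply List.Lex.cons
          apply ih t' hs.2 ht.2 (by simpa using hlen) v
          · intro z hz
            have := hlt z hz
            have hzx : y ≠ z := fun hc => absurd (hc ▸ hx) (ne_of_lt hz)
            simp [List.count_cons, hzx] at this
            simpa [List.count_cons, hzx] using this
          · have := hv
            simp [List.count_cons, hx] at this ⊢
            omega
        · exact List.Lex.rel (hx ▸ hy : (· < ·) x y)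

lemma count_sortedRatios [Fintype V] [DecidableEq V] (G : SimpleGraph V) [DecidableRel G.Adj]
    (D : V → ℝ) (g : V → V → ℝ) (z : ℝ) :
    (sortedRatios G D g).count z = (Finset.univ.filter (fun u => z = ratio G D g u)).card := by
  rw [sortedRatios, ← Multiset.coe_count, Multiset.sort_eq, Multiset.count_map]
  rw [Finset.card_def, Finset.filter_val]

lemma length_sortedRatios [Fintype V] [DecidableEq V] (G : SimpleGraph V) [DecidableRel G.Adj]
    (D : V → ℝ) (g : V → V → ℝ) :
    (sortedRatios G D g).length = Fintype.card V := by
  rw [sortedRatios, Multiset.length_sort, Multiset.card_map]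
  rfl

lemma sorted_sortedRatios [Fintype V] [DecidableEq V] (G : SimpleGraph V) [DecidableRel G.Adj]
    (D : V → ℝ) (g : V → V → ℝ) :
    (sortedRatios G D g).Pairwise (· ≤ ·) := Multiset.pairwise_sort _ _

lemma key_lemma [Fintype V] [Nonempty V] [DecidableEq V] (G : SimpleGraph V) [DecidableRel G.Adj]
    (D : V → ℝ) (hD : ∀ i, 0 < D i) (d : V → V → ℝ) (hopt : LexOpt G D d)
    {j k i : V} (hjk : 0 < d j k) (hji : G.Adj j i)
    (hik : ratio G D d i < ratio G D d k) : False := by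
  classical
  obtain ⟨⟨hnn, hsupp, hrow⟩, hlex⟩ := hopt
  set f := ratio G D d with hf
  have hadjjk : G.Adj j k := by
    by_contra h
    rw [hsupp j k h] at hjk
    exact lt_irrefl 0 hjk
  have hik_ne : i ≠ k := fun h => absurd hik (by rw [h]; exact lt_irrefl _)
  have hDi := hD i
  have hDk := hD k
  set s : ℝ := 1 / D i + 1 / D k with hsdef
  have hs : 0 < s := by positivity
  set gap : ℝ := f k - f i with hgap
  have hgap0 : 0 < gap := by simp [hgap]; linarith
  set ε : ℝ := min (d j k) (gap / (s + 1)) with hε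
  have hε0 : 0 < ε := lt_min hjk (by positivity)
  have hεd : ε ≤ d j k := min_le_left _ _
  have hεs : ε * s < gap := by
    have h1 : ε ≤ gap / (s + 1) := min_le_right _ _
    have h2 : ε * (s + 1) ≤ gap := by
      rw [← div_mul_cancel₀ gap (show s + 1 ≠ 0 by linarith)]
      exact mul_le_mul_of_nonneg_right h1 (by linarith)
    nlinarith
  have hlt2 : f i + ε / D i < f k - ε / D k := by
    have : ε / D i + ε / D k = ε * s := by
      rw [hsdef]; field_simp
    have h3 : ε / D i + ε / D k < gap := by rw [this]; exact hεs
    rw [hgap] at h3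
    linarith
  set d' : V → V → ℝ := fun a b =>
    d a b + (if a = j ∧ b = k then -ε else 0) + (if a = j ∧ b = i then ε else 0) with hd'
  have halloc' : IsAlloc G D d' := by
    refine ⟨?_, ?_, ?_⟩
    · intro a b
      simp only [hd']
      split_ifs with h1 h2 h2
      · exact absurd (h2.2 ▸ h1.2) hik_ne
      · obtain ⟨rfl, rfl⟩ := h1
        have := hεd; linarith
      · have := hnn a b; linarith
      · have := hnn a b; linarith
    · intro a b hnadj
      have h1 : ¬(a = j ∧ b = k) := fun h => hnadj (h.1 ▸ h.2 ▸ hadjjk)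
      have h2 : ¬(a = j ∧ b = i) := fun h => hnadj (h.1 ▸ h.2 ▸ hji)
      simp [hd', h1, h2, hsupp a b hnadj]
    · intro a
      by_cases ha : a = j
      · subst ha
        simp only [hd']
        rw [Finset.sum_add_distrib, Finset.sum_add_distrib]
        simp only [eq_self_iff_true, true_and]
        have e1 : ∑ b ∈ G.neighborFinset a, (if b = k then -ε else 0) = -ε := by
          rw [Finset.sum_ite_eq' (G.neighborFinset a) k fun _ => -ε]
          simp [SimpleGraph.mem_neighborFinset, hadjjk]
        have e2 : ∑ b ∈ G.neighborFinset a, (if b = i then ε else 0) = ε := by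
          rw [Finset.sum_ite_eq' (G.neighborFinset a) i fun _ => ε]
          simp [SimpleGraph.mem_neighborFinset, hji]
        rw [e1, e2, hrow a]
        ring
      · have : ∀ b ∈ G.neighborFinset a, d' a b = d a b := by
          intro b _
          simp [hd', ha]
        rw [Finset.sum_congr rfl this, hrow a]
  have hrecv : ∀ x, recv G d' x =
      recv G d x + (if x = k then -ε else 0) + (if x = i then ε else 0) := by
    intro x
    simp only [recv, hd']
    rw [Finset.sum_add_distrib, Finset.sum_add_distrib]
    congr 1
    · congr 1
      by_cases hx : x = k
      · subst hx
        simp only [eq_self_iff_true, and_true]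
        rw [Finset.sum_ite_eq' (G.neighborFinset x) j fun _ => -ε]
        simp [SimpleGraph.mem_neighborFinset, hadjjk.symm]
      · simp only [hx, and_false, if_false]
        simp
    · by_cases hx : x = i
      · subst hx
        simp only [eq_self_iff_true, and_true]
        rw [Finset.sum_ite_eq' (G.neighborFinset x) j fun _ => ε]
        simp [SimpleGraph.mem_neighborFinset, hji.symm]
      · simp only [hx, and_false, if_false]
        simp
  apply hlex d' halloc'
  have hfi' : ratio G D d' i = f i + ε / D i := by
    rw [ratio, hrecv i, if_neg hik_ne, if_pos rfl, add_zero, add_div]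
    rfl
  have hfk' : ratio G D d' k = f k - ε / D k := by
    rw [ratio, hrecv k, if_pos rfl, if_neg (Ne.symm hik_ne), add_zero, add_div]
    rw [neg_div, ← sub_eq_add_neg]
    rfl
  have hfx' : ∀ x, x ≠ i → x ≠ k → ratio G D d' x = f x := by
    intro x h1 h2
    rw [ratio, hrecv x, if_neg h2, if_neg h1, add_zero, add_zero]
    rfl
  have hvlt_i' : f i < ratio G D d' i := by
    rw [hfi']
    have : 0 < ε / D i := div_pos hε0 hDi
    linarith
  have hvlt_k' : f i < ratio G D d' k := by
    rw [hfk']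
    have : 0 < ε / D i := div_pos hε0 hDi
    linarith
  apply lex_of_count _ _ (sorted_sortedRatios G D d) (sorted_sortedRatios G D d')
    (by rw [length_sortedRatios, length_sortedRatios]) (f i)
  · intro z hz
    rw [count_sortedRatios, count_sortedRatios]
    congr 1
    apply Finset.filter_congr
    intro u _
    by_cases hui : u = i
    · subst hui
      exact iff_of_false (ne_of_lt hz) (ne_of_lt (lt_trans hz hvlt_i'))
    · by_cases huk : u = k
      · subst huk
        exact iff_of_false (ne_of_lt (lt_trans hz hik)) (ne_of_lt (lt_trans hz hvlt_k'))
      · rw [hfx' u hui huk]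
  · rw [count_sortedRatios, count_sortedRatios]
    have hset : Finset.univ.filter (fun u => f i = f u) =
        insert i (Finset.univ.filter (fun u => f i = ratio G D d' u)) := by
      ext u
      simp only [Finset.mem_insert, Finset.mem_filter, Finset.mem_univ, true_and]
      constructor
      · intro h
        by_cases hui : u = i
        · exact Or.inl hui
        · right
          by_cases huk : u = k
          · subst huk
            exfalso; linarith
          · rw [hfx' u hui huk]; exact h
      · rintro (rfl | h)
        · rfl
        · by_cases hui : u = i
          · subst hui
            exfalso; linarith
          · by_cases huk : u = k
            · subst huk
              exfalso; linarith
            · rw [hfx' u hui huk] at h; exact h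
    have hnotmem : i ∉ Finset.univ.filter (fun u => f i = ratio G D d' u) := by
      simp only [Finset.mem_filter, Finset.mem_univ, true_and]
      intro h
      linarith
    rw [hset, Finset.card_insert_of_notMem hnotmem]
    omega

theorem stmt9 [Fintype V] [Nonempty V] [DecidableEq V] (G : SimpleGraph V) [DecidableRel G.Adj]
    (hconn : G.Connected) (D : V → ℝ) (hD : ∀ i, 0 < D i) (d : V → V → ℝ)
    (hopt : LexOpt G D d) (hK : ∃ i j, ratio G D d i ≠ ratio G D d j) :
    minRatio G D d * maxRatio G D d = 1 := by
  classical
  obtain ⟨⟨hnn, hsupp, hrow⟩, -⟩ := id hopt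
  set f := ratio G D d with hf
  set m := minRatio G D d with hm
  set M := maxRatio G D d with hM
  have hm_le : ∀ x, m ≤ f x := fun x => Finset.inf'_le _ (Finset.mem_univ x)
  have hM_ge : ∀ x, f x ≤ M := fun x => Finset.le_sup' _ (Finset.mem_univ x)
  have hkey : ∀ a b c, 0 < d a b → G.Adj a c → f b ≤ f c := by
    intro a b c h1 h2
    by_contra h
    exact key_lemma G D hD d hopt h1 h2 (lt_of_not_ge h)
  have hd_adj : ∀ a b, d a b ≠ 0 → G.Adj a b := fun a b h => by
    by_contra hn; exact h (hsupp a b hn)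
  have hd_pos : ∀ a b, d a b ≠ 0 → 0 < d a b := fun a b h => lt_of_le_of_ne (hnn a b) (Ne.symm h)
  have hrecv_univ : ∀ x, recv G d x = ∑ l ∈ Finset.univ, d l x := by
    intro x
    rw [recv]
    apply Finset.sum_subset (Finset.subset_univ _)
    intro l _ hl
    by_contra h
    exact hl (by rw [SimpleGraph.mem_neighborFinset]; exact (hd_adj l x h).symm)
  have hrow_univ : ∀ l, ∑ x ∈ Finset.univ, d l x = D l := by
    intro l
    rw [← hrow l]
    symm
    apply Finset.sum_subset (Finset.subset_univ _)
    intro x _ hx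
    by_contra h
    exact hx (by rw [SimpleGraph.mem_neighborFinset]; exact hd_adj l x h)
  have hratio_recv : ∀ x, recv G d x = f x * D x := by
    intro x
    rw [hf]
    simp only [ratio]
    rw [div_mul_cancel₀ _ (ne_of_gt (hD x))]
  -- Part 1 : 1 ≤ m * M
  set S := Finset.univ.filter (fun x => f x = m) with hS
  have hSne : S.Nonempty := by
    obtain ⟨x, _, hx2⟩ := Finset.exists_mem_eq_inf' (Finset.univ_nonempty) f
    exact ⟨x, by simp [hS]; exact hx2.symm⟩
  set Q := Finset.univ.filter (fun l => ∃ u ∈ S, G.Adj l u) with hQ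
  have hmemS : ∀ x, x ∈ S ↔ f x = m := by intro x; simp [hS]
  have hmemQ : ∀ l, l ∈ Q ↔ ∃ u ∈ S, G.Adj l u := by intro l; simp [hQ]
  have e1 : ∑ x ∈ S, recv G d x = ∑ l ∈ Q, D l := by
    calc ∑ x ∈ S, recv G d x = ∑ x ∈ S, ∑ l ∈ Finset.univ, d l x :=
          Finset.sum_congr rfl (fun x _ => hrecv_univ x)
      _ = ∑ l ∈ Finset.univ, ∑ x ∈ S, d l x := Finset.sum_comm
      _ = ∑ l ∈ Q, ∑ x ∈ S, d l x := by
          refine (Finset.sum_subset (Finset.subset_univ Q) ?_).symm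
          intro l _ hl
          apply Finset.sum_eq_zero
          intro x hx
          by_contra h
          exact hl ((hmemQ l).mpr ⟨x, hx, hd_adj l x h⟩)
      _ = ∑ l ∈ Q, D l := by
          refine Finset.sum_congr rfl (fun l hl => ?_)
          rw [← hrow_univ l]
          apply Finset.sum_subset (Finset.subset_univ S)
          intro x _ hx
          by_contra h
          obtain ⟨u, hu, hadj⟩ := (hmemQ l).mp hl
          have h1 : f x ≤ f u := hkey l x u (hd_pos l x h) hadj
          rw [(hmemS u).mp hu] at h1
          exact hx ((hmemS x).mpr (le_antisymm h1 (hm_le x)))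
  have e2 : ∑ x ∈ S, recv G d x = m * ∑ x ∈ S, D x := by
    rw [Finset.mul_sum]
    refine Finset.sum_congr rfl (fun x hx => ?_)
    rw [hratio_recv x, (hmemS x).mp hx]
  have h2 : ∑ l ∈ S, D l ≤ ∑ x ∈ Q, recv G d x := by
    have step1 : ∑ l ∈ S, D l = ∑ l ∈ S, ∑ x ∈ Q, d l x := by
      refine Finset.sum_congr rfl (fun l hl => ?_)
      rw [← hrow_univ l]
      refine (Finset.sum_subset (Finset.subset_univ Q) ?_).symm
      intro x _ hx
      by_contra h
      exact hx ((hmemQ x).mpr ⟨l, hl, (hd_adj l x h).symm⟩)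
    rw [step1]
    calc ∑ l ∈ S, ∑ x ∈ Q, d l x ≤ ∑ l ∈ Finset.univ, ∑ x ∈ Q, d l x :=
          Finset.sum_le_sum_of_subset_of_nonneg (Finset.subset_univ S)
            (fun l _ _ => Finset.sum_nonneg (fun x _ => hnn l x))
      _ = ∑ x ∈ Q, ∑ l ∈ Finset.univ, d l x := Finset.sum_comm
      _ = ∑ x ∈ Q, recv G d x := Finset.sum_congr rfl (fun x _ => (hrecv_univ x).symm)
  have h3 : ∑ x ∈ Q, recv G d x ≤ M * (m * ∑ x ∈ S, D x) := by
    calc ∑ x ∈ Q, recv G d x ≤ ∑ x ∈ Q, M * D x := by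
          refine Finset.sum_le_sum (fun x _ => ?_)
          rw [hratio_recv x]
          exact mul_le_mul_of_nonneg_right (hM_ge x) (le_of_lt (hD x))
      _ = M * ∑ x ∈ Q, D x := (Finset.mul_sum _ _ _).symm
      _ = M * (m * ∑ x ∈ S, D x) := by rw [← e1, ← e2]
  have hSpos : 0 < ∑ x ∈ S, D x := Finset.sum_pos (fun x _ => hD x) hSne
  have part1 : 1 ≤ m * M := by nlinarith [le_trans h2 h3, hSpos]
  -- Part 2 : m * M ≤ 1
  set U := Finset.univ.filter (fun x => f x = M) with hU
  have hUne : U.Nonempty := by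
    obtain ⟨x, _, hx2⟩ := Finset.exists_mem_eq_sup' (Finset.univ_nonempty) f
    exact ⟨x, by simp [hU]; exact hx2.symm⟩
  have hmemU : ∀ x, x ∈ U ↔ f x = M := by intro x; simp [hU]
  set W := Finset.univ.filter (fun l => ∀ y ∈ G.neighborFinset l, f y = M) with hW
  have hmemW : ∀ l, l ∈ W ↔ ∀ y ∈ G.neighborFinset l, f y = M := by intro l; simp [hW]
  have e4 : ∑ x ∈ U, recv G d x = ∑ l ∈ W, D l := by
    calc ∑ x ∈ U, recv G d x = ∑ x ∈ U, ∑ l ∈ Finset.univ, d l x :=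
          Finset.sum_congr rfl (fun x _ => hrecv_univ x)
      _ = ∑ l ∈ Finset.univ, ∑ x ∈ U, d l x := Finset.sum_comm
      _ = ∑ l ∈ W, ∑ x ∈ U, d l x := by
          refine (Finset.sum_subset (Finset.subset_univ W) ?_).symm
          intro l _ hl
          rw [hmemW l] at hl
          push_neg at hl
          obtain ⟨y, hy, hyM⟩ := hl
          apply Finset.sum_eq_zero
          intro x hx
          by_contra h
          have h1 : f x ≤ f y := hkey l x y (hd_pos l x h)
            ((SimpleGraph.mem_neighborFinset _ _ _).mp hy)
          rw [(hmemU x).mp hx] at h1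
          exact hyM (le_antisymm (hM_ge y) h1)
      _ = ∑ l ∈ W, D l := by
          refine Finset.sum_congr rfl (fun l hl => ?_)
          rw [← hrow_univ l]
          apply Finset.sum_subset (Finset.subset_univ U)
          intro x _ hx
          by_contra h
          have hxn : x ∈ G.neighborFinset l :=
            (SimpleGraph.mem_neighborFinset _ _ _).mpr (hd_adj l x h)
          exact hx ((hmemU x).mpr ((hmemW l).mp hl x hxn))
  have e5 : ∑ x ∈ U, recv G d x = M * ∑ x ∈ U, D x := by
    rw [Finset.mul_sum]
    refine Finset.sum_congr rfl (fun x hx => ?_)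
    rw [hratio_recv x, (hmemU x).mp hx]
  have h5 : m * ∑ x ∈ W, D x ≤ ∑ x ∈ W, recv G d x := by
    rw [Finset.mul_sum]
    refine Finset.sum_le_sum (fun x _ => ?_)
    rw [hratio_recv x]
    exact mul_le_mul_of_nonneg_right (hm_le x) (le_of_lt (hD x))
  have h6 : ∑ x ∈ W, recv G d x ≤ ∑ l ∈ U, D l := by
    calc ∑ x ∈ W, recv G d x = ∑ x ∈ W, ∑ l ∈ Finset.univ, d l x :=
          Finset.sum_congr rfl (fun x _ => hrecv_univ x)
      _ = ∑ l ∈ Finset.univ, ∑ x ∈ W, d l x := Finset.sum_comm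
      _ = ∑ l ∈ U, ∑ x ∈ W, d l x := by
          refine (Finset.sum_subset (Finset.subset_univ U) ?_).symm
          intro l _ hl
          apply Finset.sum_eq_zero
          intro x hx
          by_contra h
          have hln : l ∈ G.neighborFinset x :=
            (SimpleGraph.mem_neighborFinset _ _ _).mpr (hd_adj l x h).symm
          exact hl ((hmemU l).mpr ((hmemW x).mp hx l hln))
      _ ≤ ∑ l ∈ U, D l := by
          refine Finset.sum_le_sum (fun l _ => ?_)
          rw [← hrow_univ l]
          exact Finset.sum_le_sum_of_subset_of_nonneg (Finset.subset_univ W)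
            (fun x _ _ => hnn l x)
  have hUpos : 0 < ∑ x ∈ U, D x := Finset.sum_pos (fun x _ => hD x) hUne
  have hWU : ∑ l ∈ W, D l = M * ∑ x ∈ U, D x := by rw [← e4, e5]
  have hfin : m * (M * ∑ x ∈ U, D x) ≤ ∑ l ∈ U, D l := by
    rw [← hWU]; exact le_trans h5 h6
  have part2 : m * M ≤ 1 := by nlinarith [hfin, hUpos]
  linarith [part1, part2]
end
end

section
/- Under a lex-optimal allocation with at least two distinct exchange ratio levels, the set of neighbors of the minimum-ratio nodes outside that set equals exactly the set of maximum-ratio nodes: N(L_1) = L_K. -/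
open Finset

noncomputable section

variable {V : Type*}

lemma sorted_lex_count {x : ℝ} : ∀ (l₁ l₂ : List ℝ), l₁.Pairwise (· ≤ ·) → l₂.Pairwise (· ≤ ·) →
    l₁.length = l₂.length → (∀ y < x, l₁.count y = l₂.count y) → l₂.count x < l₁.count x →
    List.Lex (· < ·) l₁ l₂
  | [], l₂, _, _, _, _, hx => by simp at hx
  | a :: t₁, [], _, _, hlen, _, _ => by simp at hlen
  | a :: t₁, b :: t₂, h₁, h₂, hlen, hlow, hx => by
    by_cases hab : a = b
    · subst hab
      apply List.Lex.cons
      refine sorted_lex_count (x := x) t₁ t₂ h₁.of_cons h₂.of_cons (by simpa using hlen) ?_ ?_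
      · intro y hy
        have := hlow y hy
        simp [List.count_cons] at this ⊢
        omega
      · have := hx
        simp [List.count_cons] at this ⊢
        omega
    · have hab' : a < b := by
        rcases lt_or_ge b x with hbx | hxb
        · have hcount : (a :: t₁).count b = (b :: t₂).count b := hlow b hbx
          have hb1 : 0 < (b :: t₂).count b := by simp [List.count_cons]
          have hbmem : b ∈ a :: t₁ := by
            rw [← List.count_pos_iff, hcount]; exact hb1
          rcases List.mem_cons.1 hbmem with h | h
          · exact absurd h.symm hab
          · exact lt_of_le_of_ne (List.rel_of_pairwise_cons h₁ h) hab
        · have hxmem : x ∈ a :: t₁ := by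
            rw [← List.count_pos_iff]; omega
          have hax : a ≤ x := by
            rcases List.mem_cons.1 hxmem with h | h
            · exact le_of_eq h.symm
            · exact List.rel_of_pairwise_cons h₁ h
          exact lt_of_le_of_ne (hax.trans hxb) hab
      exact List.Lex.rel hab'

lemma count_sort (s : Multiset ℝ) (y : ℝ) : (s.sort (· ≤ ·)).count y = s.count y := by
  rw [← Multiset.coe_count, Multiset.sort_eq]

lemma lex_of_multiset_counts (s₁ s₂ : Multiset ℝ) (x : ℝ)
    (hcard : Multiset.card s₁ = Multiset.card s₂)
    (hlow : ∀ y < x, s₁.count y = s₂.count y) (hx : s₂.count x < s₁.count x) :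
    List.Lex (· < ·) (s₁.sort (· ≤ ·)) (s₂.sort (· ≤ ·)) := by
  apply sorted_lex_count (x := x) _ _ (Multiset.pairwise_sort _ _) (Multiset.pairwise_sort _ _)
  · rw [Multiset.length_sort, Multiset.length_sort]; exact hcard
  · intro y hy; rw [count_sort, count_sort]; exact hlow y hy
  · rw [count_sort, count_sort]; exact hx

lemma sum_ite_and {α : Type*} [DecidableEq α] (s : Finset α) (k : α) (Q : Prop) [Decidable Q]
    (c : ℝ) : (∑ j ∈ s, if Q ∧ j = k then c else 0) = if Q ∧ k ∈ s then c else 0 := by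
  by_cases hQ : Q
  · simp only [hQ, true_and]
    exact Finset.sum_ite_eq' s k fun _ => c
  · simp [hQ]

lemma key_F1 [Fintype V] [DecidableEq V] (G : SimpleGraph V) [DecidableRel G.Adj]
    (D : V → ℝ) (hD : ∀ i, 0 < D i) (d : V → V → ℝ) (hopt : LexOpt G D d)
    {i k k' : V} (hik : G.Adj i k) (hik' : G.Adj i k') (hpos : 0 < d i k) :
    ratio G D d k ≤ ratio G D d k' := by
  by_contra hcon
  push_neg at hcon
  obtain ⟨⟨hnn, hsupp, hsum⟩, hno⟩ := hopt
  have hkk' : k ≠ k' := by rintro rfl; exact lt_irrefl _ hcon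
  set ε : ℝ := min (d i k) ((ratio G D d k - ratio G D d k') * D k / 2) with hε
  have hε0 : 0 < ε := by
    apply lt_min hpos
    have h1 := hD k
    have : 0 < (ratio G D d k - ratio G D d k') * D k := by nlinarith
    linarith
  have hεd : ε ≤ d i k := min_le_left _ _
  have hεr : ε / D k < ratio G D d k - ratio G D d k' := by
    rw [div_lt_iff₀ (hD k)]
    have h2 : ε ≤ (ratio G D d k - ratio G D d k') * D k / 2 := min_le_right _ _
    have : 0 < (ratio G D d k - ratio G D d k') * D k := by nlinarith [hD k]
    linarith
  set d' : V → V → ℝ := fun a b =>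
    d a b + (if a = i ∧ b = k then -ε else 0) + (if a = i ∧ b = k' then ε else 0) with hd'
  have halloc' : IsAlloc G D d' := by
    refine ⟨?_, ?_, ?_⟩
    · intro a b
      simp only [hd']
      by_cases h1 : a = i ∧ b = k
      · have h2 : ¬(a = i ∧ b = k') := fun h2 => hkk' (h1.2.symm.trans h2.2)
        rw [if_pos h1, if_neg h2]
        have hd1 : d a b = d i k := by rw [h1.1, h1.2]
        rw [hd1]; linarith
      · rw [if_neg h1]
        by_cases h2 : a = i ∧ b = k'
        · rw [if_pos h2]
          have := hnn a b
          linarith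
        · rw [if_neg h2]
          have := hnn a b
          linarith
    · intro a b hnadj
      have h1 : ¬(a = i ∧ b = k) := by rintro ⟨rfl, rfl⟩; exact hnadj hik
      have h2 : ¬(a = i ∧ b = k') := by rintro ⟨rfl, rfl⟩; exact hnadj hik'
      simp only [hd']
      rw [if_neg h1, if_neg h2, hsupp a b hnadj]
      ring
    · intro a
      simp only [hd']
      rw [Finset.sum_add_distrib, Finset.sum_add_distrib, hsum a,
        sum_ite_and (G.neighborFinset a) k (a = i) (-ε),
        sum_ite_and (G.neighborFinset a) k' (a = i) ε]
      by_cases ha : a = i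
      · rw [if_pos ⟨ha, by rw [ha]; exact (G.mem_neighborFinset i k).2 hik⟩,
          if_pos ⟨ha, by rw [ha]; exact (G.mem_neighborFinset i k').2 hik'⟩]
        ring
      · rw [if_neg (fun h => ha h.1), if_neg (fun h => ha h.1)]
        ring
  have hrecv' : ∀ x, recv G d' x = recv G d x
      + (if x = k then -ε else 0) + (if x = k' then ε else 0) := by
    intro x
    unfold recv
    simp only [hd']
    rw [Finset.sum_add_distrib, Finset.sum_add_distrib]
    congr 2
    · have : ∀ j, (if j = i ∧ x = k then (-ε : ℝ) else 0) = if x = k ∧ j = i then -ε else 0 := by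
        intro j; exact if_congr and_comm rfl rfl
      simp only [this]
      rw [sum_ite_and (G.neighborFinset x) i (x = k) (-ε)]
      by_cases hx : x = k
      · rw [if_pos ⟨hx, by rw [hx]; exact (G.mem_neighborFinset k i).2 hik.symm⟩, if_pos hx]
      · rw [if_neg (fun h => hx h.1), if_neg hx]
    · have : ∀ j, (if j = i ∧ x = k' then (ε : ℝ) else 0) = if x = k' ∧ j = i then ε else 0 := by
        intro j; exact if_congr and_comm rfl rfl
      simp only [this]
      rw [sum_ite_and (G.neighborFinset x) i (x = k') ε]
      by_cases hx : x = k'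
      · rw [if_pos ⟨hx, by rw [hx]; exact (G.mem_neighborFinset k' i).2 hik'.symm⟩, if_pos hx]
      · rw [if_neg (fun h => hx h.1), if_neg hx]
  have hrk : ratio G D d' k = ratio G D d k - ε / D k := by
    unfold ratio
    rw [hrecv' k, if_pos rfl, if_neg hkk']
    have h : recv G d k + -ε + 0 = recv G d k - ε := by ring
    rw [h, sub_div]
  have hrk' : ratio G D d' k' = ratio G D d k' + ε / D k' := by
    unfold ratio
    rw [hrecv' k', if_neg (Ne.symm hkk'), if_pos rfl]
    have h : recv G d k' + 0 + ε = recv G d k' + ε := by ring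
    rw [h, add_div]
  have hro : ∀ x, x ≠ k → x ≠ k' → ratio G D d' x = ratio G D d x := by
    intro x h1 h2
    unfold ratio
    rw [hrecv' x, if_neg h1, if_neg h2]
    norm_num
  apply hno d' halloc'
  unfold sortedRatios
  have hkmem : k ∈ Finset.univ.val := Finset.mem_univ_val k
  have hk'mem : k' ∈ (Finset.univ.val (α := V)).erase k := by
    rw [Multiset.mem_erase_of_ne (Ne.symm hkk')]
    exact Finset.mem_univ_val k'
  set rest : Multiset V := ((Finset.univ.val (α := V)).erase k).erase k' with hrest
  have hdecomp : (Finset.univ.val (α := V)) = k ::ₘ k' ::ₘ rest := by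
    rw [Multiset.cons_erase hk'mem, Multiset.cons_erase hkmem]
  have hnd : (Finset.univ.val (α := V)).Nodup := Finset.univ.nodup
  have hrestne : ∀ a ∈ rest, a ≠ k ∧ a ≠ k' := by
    intro a ha
    rw [hrest, Multiset.Nodup.mem_erase_iff (hnd.erase k)] at ha
    obtain ⟨hak', ha2⟩ := ha
    rw [Multiset.Nodup.mem_erase_iff hnd] at ha2
    exact ⟨ha2.1, hak'⟩
  have hmapeq : rest.map (ratio G D d') = rest.map (ratio G D d) := by
    apply Multiset.map_congr rfl
    intro a ha
    exact hro a (hrestne a ha).1 (hrestne a ha).2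
  have hεk : 0 < ε / D k := div_pos hε0 (hD k)
  have hεk' : 0 < ε / D k' := div_pos hε0 (hD k')
  have hv1 : ratio G D d k' < ratio G D d k := hcon
  have hv2 : ratio G D d k' < ratio G D d' k := by rw [hrk]; linarith
  have hv3 : ratio G D d k' < ratio G D d' k' := by rw [hrk']; linarith
  apply lex_of_multiset_counts _ _ (ratio G D d k')
  · simp
  · intro y hy
    rw [hdecomp, Multiset.map_cons, Multiset.map_cons, Multiset.map_cons, Multiset.map_cons,
      hmapeq, Multiset.count_cons, Multiset.count_cons, Multiset.count_cons, Multiset.count_cons,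
      if_neg (ne_of_lt hy), if_neg (ne_of_lt (hy.trans hv1)),
      if_neg (ne_of_lt (hy.trans hv3)), if_neg (ne_of_lt (hy.trans hv2))]
  · rw [hdecomp, Multiset.map_cons, Multiset.map_cons, Multiset.map_cons, Multiset.map_cons,
      hmapeq, Multiset.count_cons, Multiset.count_cons, Multiset.count_cons, Multiset.count_cons,
      if_neg (ne_of_lt hv3), if_neg (ne_of_lt hv2), if_pos rfl, if_neg (ne_of_lt hv1)]
    omega

theorem stmt10 [Fintype V] [Nonempty V] [DecidableEq V] (G : SimpleGraph V) [DecidableRel G.Adj]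
    (hconn : G.Connected) (D : V → ℝ) (hD : ∀ i, 0 < D i) (d : V → V → ℝ)
    (hopt : LexOpt G D d) (hK : ∃ i j, ratio G D d i ≠ ratio G D d j) :
    extNbhd G (minSet G D d) = maxSet G D d := by
  classical
  obtain ⟨⟨hnn, hsupp, hsum⟩, -⟩ := id hopt
  have hF1 : ∀ {i k k' : V}, G.Adj i k → G.Adj i k' → 0 < d i k →
      ratio G D d k ≤ ratio G D d k' := fun h h' hp => key_F1 G D hD d hopt h h' hp
  have hDsum : ∀ a, ∑ j, d a j = D a := by
    intro a
    rw [← hsum a]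
    symm
    apply Finset.sum_subset (Finset.subset_univ _)
    intro x _ hx
    exact hsupp a x (fun hadj => hx ((G.mem_neighborFinset a x).2 hadj))
  have hrecv : ∀ a, recv G d a = ∑ j, d j a := by
    intro a
    unfold recv
    apply Finset.sum_subset (Finset.subset_univ _)
    intro x _ hx
    exact hsupp x a (fun hadj => hx ((G.mem_neighborFinset a x).2 hadj.symm))
  have hratioD : ∀ a, ratio G D d a * D a = recv G d a := by
    intro a
    unfold ratio
    rw [div_mul_cancel₀ _ (hD a).ne']
  have hmin : ∀ a, minRatio G D d ≤ ratio G D d a := fun a => Finset.inf'_le _ (mem_univ a)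
  have hmax : ∀ a, ratio G D d a ≤ maxRatio G D d := fun a => Finset.le_sup' _ (mem_univ a)
  have hminlt : minRatio G D d < maxRatio G D d := by
    by_contra h
    push_neg at h
    obtain ⟨i, j, hij⟩ := hK
    have h1 : ratio G D d i = minRatio G D d :=
      le_antisymm ((hmax i).trans h) (hmin i)
    have h2 : ratio G D d j = minRatio G D d :=
      le_antisymm ((hmax j).trans h) (hmin j)
    exact hij (h1.trans h2.symm)
  have hL1mem : ∀ a, a ∈ minSet G D d ↔ ratio G D d a = minRatio G D d := by
    intro a; simp [minSet]
  have hLKmem : ∀ a, a ∈ maxSet G D d ↔ ratio G D d a = maxRatio G D d := by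
    intro a; simp [maxSet]
  have hL1ne : (minSet G D d).Nonempty := by
    obtain ⟨i, -, hi⟩ := Finset.exists_mem_eq_inf' (Finset.univ_nonempty (α := V)) (ratio G D d)
    exact ⟨i, (hL1mem i).2 hi.symm⟩
  have hLKne : (maxSet G D d).Nonempty := by
    obtain ⟨i, -, hi⟩ := Finset.exists_mem_eq_sup' (Finset.univ_nonempty (α := V)) (ratio G D d)
    exact ⟨i, (hLKmem i).2 hi.symm⟩
  have hnbne : ∀ a, (G.neighborFinset a).Nonempty := by
    intro a
    by_contra h
    rw [Finset.not_nonempty_iff_eq_empty] at h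
    have := hsum a
    rw [h, Finset.sum_empty] at this
    exact (hD a).ne this
  have hdadj : ∀ x y, d x y ≠ 0 → G.Adj x y := by
    intro x y h
    by_contra hn
    exact h (hsupp x y hn)
  set A1 : Finset V := univ.filter (fun a => ∃ x ∈ G.neighborFinset a, x ∈ minSet G D d)
    with hA1def
  set Z : Finset V := univ.filter (fun a => ∀ x ∈ G.neighborFinset a, x ∈ maxSet G D d)
    with hZdef
  -- members of A1 send only into minSet
  have hA1send : ∀ j ∈ A1, ∀ x, x ∉ minSet G D d → d j x = 0 := by
    intro j hj x hx
    by_contra hne0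
    have hadj := hdadj j x hne0
    have hposd : 0 < d j x := (hnn j x).lt_of_ne (Ne.symm hne0)
    rw [hA1def, Finset.mem_filter] at hj
    obtain ⟨-, k0, hk0n, hk0m⟩ := hj
    have h1 : ratio G D d x ≤ ratio G D d k0 :=
      hF1 hadj ((G.mem_neighborFinset j k0).1 hk0n) hposd
    rw [(hL1mem k0).1 hk0m] at h1
    exact hx ((hL1mem x).2 (le_antisymm h1 (hmin x)))
  have hA1out : ∀ j, j ∉ A1 → ∀ x ∈ minSet G D d, d j x = 0 := by
    intro j hj x hx
    by_contra hne0
    apply hj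
    rw [hA1def, Finset.mem_filter]
    exact ⟨mem_univ j, x, (G.mem_neighborFinset j x).2 (hdadj j x hne0), hx⟩
  have hsum1 : minRatio G D d * ∑ x ∈ minSet G D d, D x = ∑ j ∈ A1, D j := by
    calc minRatio G D d * ∑ x ∈ minSet G D d, D x
        = ∑ x ∈ minSet G D d, ratio G D d x * D x := by
          rw [Finset.mul_sum]
          exact Finset.sum_congr rfl (fun x hx => by rw [(hL1mem x).1 hx])
      _ = ∑ x ∈ minSet G D d, recv G d x := Finset.sum_congr rfl (fun x _ => hratioD x)
      _ = ∑ x ∈ minSet G D d, ∑ j, d j x := Finset.sum_congr rfl (fun x _ => hrecv x)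
      _ = ∑ j, ∑ x ∈ minSet G D d, d j x := Finset.sum_comm
      _ = ∑ j ∈ A1, ∑ x ∈ minSet G D d, d j x :=
          (Finset.sum_subset (Finset.subset_univ A1) (fun j _ hj =>
            Finset.sum_eq_zero (fun x hx => hA1out j hj x hx))).symm
      _ = ∑ j ∈ A1, ∑ x, d j x :=
          Finset.sum_congr rfl (fun j hj => Finset.sum_subset (Finset.subset_univ _)
            (fun x _ hx => hA1send j hj x hx))
      _ = ∑ j ∈ A1, D j := Finset.sum_congr rfl (fun j _ => hDsum j)
  have hL1pos : 0 < ∑ x ∈ minSet G D d, D x :=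
    Finset.sum_pos (fun x _ => hD x) hL1ne
  have hKpos : 0 < ∑ x ∈ maxSet G D d, D x :=
    Finset.sum_pos (fun x _ => hD x) hLKne
  have hA1pos : 0 < ∑ j ∈ A1, D j := by
    obtain ⟨i0, hi0⟩ := hL1ne
    obtain ⟨j0, hj0⟩ := hnbne i0
    have hj0A : j0 ∈ A1 := by
      rw [hA1def, Finset.mem_filter]
      refine ⟨mem_univ j0, i0, ?_, hi0⟩
      rw [G.mem_neighborFinset] at hj0 ⊢
      exact hj0.symm
    exact Finset.sum_pos' (fun x _ => (hD x).le) ⟨j0, hj0A, hD j0⟩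
  have hmin0 : 0 < minRatio G D d := by
    by_contra h
    push_neg at h
    nlinarith
  have hZsend : ∀ j ∈ Z, ∀ x, x ∉ maxSet G D d → d j x = 0 := by
    intro j hj x hx
    by_contra hne0
    rw [hZdef, Finset.mem_filter] at hj
    exact hx (hj.2 x ((G.mem_neighborFinset j x).2 (hdadj j x hne0)))
  have hZout : ∀ j, j ∉ Z → ∀ x ∈ maxSet G D d, d j x = 0 := by
    intro j hj x hx
    by_contra hne0
    rw [hZdef, Finset.mem_filter] at hj
    push_neg at hj
    obtain ⟨k', hk'n, hk'm⟩ := hj (mem_univ j)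
    have h1 : ratio G D d x ≤ ratio G D d k' :=
      hF1 (hdadj j x hne0) ((G.mem_neighborFinset j k').1 hk'n) ((hnn j x).lt_of_ne (Ne.symm hne0))
    rw [(hLKmem x).1 hx] at h1
    exact hk'm ((hLKmem k').2 (le_antisymm (hmax k') h1))
  have hsumK : maxRatio G D d * ∑ x ∈ maxSet G D d, D x = ∑ j ∈ Z, D j := by
    calc maxRatio G D d * ∑ x ∈ maxSet G D d, D x
        = ∑ x ∈ maxSet G D d, ratio G D d x * D x := by
          rw [Finset.mul_sum]
          exact Finset.sum_congr rfl (fun x hx => by rw [(hLKmem x).1 hx])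
      _ = ∑ x ∈ maxSet G D d, recv G d x := Finset.sum_congr rfl (fun x _ => hratioD x)
      _ = ∑ x ∈ maxSet G D d, ∑ j, d j x := Finset.sum_congr rfl (fun x _ => hrecv x)
      _ = ∑ j, ∑ x ∈ maxSet G D d, d j x := Finset.sum_comm
      _ = ∑ j ∈ Z, ∑ x ∈ maxSet G D d, d j x :=
          (Finset.sum_subset (Finset.subset_univ Z) (fun j _ hj =>
            Finset.sum_eq_zero (fun x hx => hZout j hj x hx))).symm
      _ = ∑ j ∈ Z, ∑ x, d j x :=
          Finset.sum_congr rfl (fun j hj => Finset.sum_subset (Finset.subset_univ _)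
            (fun x _ hx => hZsend j hj x hx))
      _ = ∑ j ∈ Z, D j := Finset.sum_congr rfl (fun j _ => hDsum j)
  -- recv(Z) ≤ D(maxSet)
  have hrecvZ : ∑ x ∈ Z, ratio G D d x * D x ≤ ∑ j ∈ maxSet G D d, D j := by
    calc ∑ x ∈ Z, ratio G D d x * D x
        = ∑ x ∈ Z, ∑ j, d j x := by
          refine Finset.sum_congr rfl (fun x _ => ?_)
          rw [hratioD x, hrecv x]
      _ = ∑ j, ∑ x ∈ Z, d j x := Finset.sum_comm
      _ = ∑ j ∈ maxSet G D d, ∑ x ∈ Z, d j x := by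
          refine (Finset.sum_subset (Finset.subset_univ _) (fun j _ hj =>
            Finset.sum_eq_zero (fun x hx => ?_))).symm
          by_contra hne0
          apply hj
          rw [hZdef, Finset.mem_filter] at hx
          exact hx.2 j ((G.mem_neighborFinset x j).2 (hdadj j x hne0).symm)
      _ ≤ ∑ j ∈ maxSet G D d, ∑ x, d j x :=
          Finset.sum_le_sum (fun j _ => Finset.sum_le_sum_of_subset_of_nonneg
            (Finset.subset_univ _) (fun x _ _ => hnn j x))
      _ = ∑ j ∈ maxSet G D d, D j := Finset.sum_congr rfl (fun j _ => hDsum j)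
  have hZlow : minRatio G D d * ∑ x ∈ Z, D x ≤ ∑ x ∈ Z, ratio G D d x * D x := by
    rw [Finset.mul_sum]
    exact Finset.sum_le_sum (fun x _ => mul_le_mul_of_nonneg_right (hmin x) (hD x).le)
  have hprod_le : minRatio G D d * maxRatio G D d ≤ 1 := by
    have h12 : minRatio G D d * (maxRatio G D d * ∑ x ∈ maxSet G D d, D x)
        ≤ ∑ j ∈ maxSet G D d, D j := by
      rw [hsumK]
      exact le_trans hZlow hrecvZ
    nlinarith
  -- recv(A1) ≥ D(minSet)
  have hrecvA1 : ∑ x ∈ minSet G D d, D x ≤ ∑ x ∈ A1, ratio G D d x * D x := by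
    have e1 : ∑ x ∈ A1, ratio G D d x * D x = ∑ j, ∑ x ∈ A1, d j x := by
      calc ∑ x ∈ A1, ratio G D d x * D x
          = ∑ x ∈ A1, ∑ j, d j x := by
            refine Finset.sum_congr rfl (fun x _ => ?_)
            rw [hratioD x, hrecv x]
        _ = ∑ j, ∑ x ∈ A1, d j x := Finset.sum_comm
    rw [e1]
    have e2 : ∑ j ∈ minSet G D d, ∑ x ∈ A1, d j x = ∑ j ∈ minSet G D d, D j := by
      refine Finset.sum_congr rfl (fun j hj => ?_)
      rw [← hDsum j]
      apply Finset.sum_subset (Finset.subset_univ _)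
      intro x _ hx
      by_contra hne0
      apply hx
      rw [hA1def, Finset.mem_filter]
      refine ⟨mem_univ x, j, ?_, hj⟩
      rw [G.mem_neighborFinset]
      exact (hdadj j x hne0).symm
    calc ∑ x ∈ minSet G D d, D x = ∑ j ∈ minSet G D d, ∑ x ∈ A1, d j x := e2.symm
      _ ≤ ∑ j, ∑ x ∈ A1, d j x :=
          Finset.sum_le_sum_of_subset_of_nonneg (Finset.subset_univ _)
            (fun j _ _ => Finset.sum_nonneg (fun x _ => hnn j x))
  -- A1 ⊆ maxSet
  have hprod_ge : 1 ≤ minRatio G D d * maxRatio G D d := by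
    have h1 : ∑ x ∈ A1, ratio G D d x * D x ≤ maxRatio G D d * ∑ x ∈ A1, D x := by
      rw [Finset.mul_sum]
      exact Finset.sum_le_sum (fun x _ => mul_le_mul_of_nonneg_right (hmax x) (hD x).le)
    rw [← hsum1] at h1
    nlinarith [le_trans hrecvA1 h1]
  have hA1max : ∀ x ∈ A1, x ∈ maxSet G D d := by
    have hsumze : ∑ x ∈ A1, (maxRatio G D d - ratio G D d x) * D x = 0 := by
      have hge : 0 ≤ ∑ x ∈ A1, (maxRatio G D d - ratio G D d x) * D x :=
        Finset.sum_nonneg (fun x _ => mul_nonneg (by linarith [hmax x]) (hD x).le)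
      have hle : ∑ x ∈ A1, (maxRatio G D d - ratio G D d x) * D x ≤ 0 := by
        have e : ∑ x ∈ A1, (maxRatio G D d - ratio G D d x) * D x
            = maxRatio G D d * ∑ x ∈ A1, D x - ∑ x ∈ A1, ratio G D d x * D x := by
          rw [Finset.mul_sum, ← Finset.sum_sub_distrib]
          exact Finset.sum_congr rfl (fun x _ => by ring)
        rw [e, ← hsum1]
        nlinarith [hrecvA1]
      linarith
    intro x hx
    have := (Finset.sum_eq_zero_iff_of_nonneg
      (fun x _ => mul_nonneg (by linarith [hmax x]) (hD x).le)).1 hsumze x hx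
    have hzz : maxRatio G D d - ratio G D d x = 0 := by
      rcases mul_eq_zero.1 this with h | h
      · exact h
      · exact absurd h (hD x).ne'
    exact (hLKmem x).2 (by linarith)
  -- Z ⊆ minSet
  have hZmin : ∀ x ∈ Z, x ∈ minSet G D d := by
    have hsumze : ∑ x ∈ Z, (ratio G D d x - minRatio G D d) * D x = 0 := by
      have hge : 0 ≤ ∑ x ∈ Z, (ratio G D d x - minRatio G D d) * D x :=
        Finset.sum_nonneg (fun x _ => mul_nonneg (by linarith [hmin x]) (hD x).le)
      have hle : ∑ x ∈ Z, (ratio G D d x - minRatio G D d) * D x ≤ 0 := by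
        have e : ∑ x ∈ Z, (ratio G D d x - minRatio G D d) * D x
            = ∑ x ∈ Z, ratio G D d x * D x - minRatio G D d * ∑ x ∈ Z, D x := by
          rw [Finset.mul_sum, ← Finset.sum_sub_distrib]
          exact Finset.sum_congr rfl (fun x _ => by ring)
        rw [e]
        have h2 : minRatio G D d * ∑ x ∈ Z, D x
            = minRatio G D d * (maxRatio G D d * ∑ x ∈ maxSet G D d, D x) := by rw [hsumK]
        nlinarith [hrecvZ]
      linarith
    intro x hx
    have := (Finset.sum_eq_zero_iff_of_nonneg
      (fun x _ => mul_nonneg (by linarith [hmin x]) (hD x).le)).1 hsumze x hx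
    have hzz : ratio G D d x - minRatio G D d = 0 := by
      rcases mul_eq_zero.1 this with h | h
      · exact h
      · exact absurd h (hD x).ne'
    exact (hL1mem x).2 (by linarith)
  -- conclude
  ext m
  constructor
  · intro hm
    unfold extNbhd at hm
    rw [Finset.mem_sdiff, Finset.mem_biUnion] at hm
    obtain ⟨⟨i, hiL1, hmn⟩, -⟩ := hm
    apply hA1max
    rw [hA1def, Finset.mem_filter]
    refine ⟨mem_univ m, i, ?_, hiL1⟩
    rw [G.mem_neighborFinset] at hmn ⊢
    exact hmn.symm
  · intro hm
    have hrm : 0 < recv G d m := by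
      rw [← hratioD m, (hLKmem m).1 hm]
      exact mul_pos (lt_trans hmin0 hminlt) (hD m)
    have hex : ∃ p, d p m ≠ 0 := by
      by_contra h
      push_neg at h
      rw [hrecv m] at hrm
      have : ∑ j, d j m = 0 := Finset.sum_eq_zero (fun j _ => h j)
      rw [this] at hrm
      exact lt_irrefl _ hrm
    obtain ⟨p, hp⟩ := hex
    have hpZ : p ∈ Z := by
      by_contra h
      exact hp (hZout p h m hm)
    have hpL1 : p ∈ minSet G D d := hZmin p hpZ
    unfold extNbhd
    rw [Finset.mem_sdiff, Finset.mem_biUnion]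
    constructor
    · exact ⟨p, hpL1, (G.mem_neighborFinset p m).2 (hdadj p m hp)⟩
    · intro hmL1
      have h1 := (hL1mem m).1 hmL1
      have h2 := (hLKmem m).1 hm
      rw [h1] at h2
      exact (lt_irrefl _ (h2 ▸ hminlt))
end
end

section
/- Under a lex-optimal allocation with at least two distinct exchange ratio levels, the total resource received by the minimum-ratio nodes equals the total endowment of the maximum-ratio nodes: ∑_{i∈L_1} r_i = ∑_{i∈L_K} D_i. -/
lemma lex_append_common {r : ℝ → ℝ → Prop} (C l1 l2 : List ℝ) (h : List.Lex r l1 l2) :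
    List.Lex r (C ++ l1) (C ++ l2) := by
  induction C with
  | nil => exact h
  | cons a C ih => exact List.Lex.cons ih

lemma sort_split (a : ℝ) (s : Multiset ℝ) :
    s.sort (· ≤ ·) = (s.filter (· < a)).sort (· ≤ ·) ++ (s.filter (fun x => ¬ x < a)).sort (· ≤ ·) := by
  apply List.Perm.eq_of_pairwise' (Multiset.pairwise_sort _ _) ?_ ?_
  · rw [List.pairwise_append]
    refine ⟨Multiset.pairwise_sort _ _, Multiset.pairwise_sort _ _, ?_⟩
    intro x hx y hy
    rw [Multiset.mem_sort] at hx hy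
    have hx' := (Multiset.mem_filter.mp hx).2
    have hy' := (Multiset.mem_filter.mp hy).2
    simp only [not_lt] at hy'
    exact le_trans (le_of_lt hx') hy'
  · rw [← Multiset.coe_eq_coe]
    show (s.sort (· ≤ ·) : Multiset ℝ) = ((_ : List ℝ) : Multiset ℝ)
    have : (((s.filter (· < a)).sort (· ≤ ·) ++ (s.filter (fun x => ¬ x < a)).sort (· ≤ ·) : List ℝ) : Multiset ℝ)
        = ((s.filter (· < a)).sort (· ≤ ·) : Multiset ℝ) + ((s.filter (fun x => ¬ x < a)).sort (· ≤ ·) : Multiset ℝ) := by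
      exact_mod_cast rfl
    rw [this, Multiset.sort_eq, Multiset.sort_eq, Multiset.sort_eq, Multiset.filter_add_not]

lemma sort_cons_min (x : ℝ) (s : Multiset ℝ) (h : ∀ y ∈ s, x ≤ y) :
    (x ::ₘ s).sort (· ≤ ·) = x :: s.sort (· ≤ ·) := by
  apply List.Perm.eq_of_pairwise' (Multiset.pairwise_sort _ _) ?_ ?_
  · exact List.pairwise_cons.mpr ⟨fun y hy => h y (by rwa [← Multiset.mem_sort (· ≤ ·)]), Multiset.pairwise_sort _ _⟩
  · rw [← Multiset.coe_eq_coe]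
    show ((x ::ₘ s).sort (· ≤ ·) : Multiset ℝ) = x ::ₘ (s.sort (· ≤ ·) : Multiset ℝ)
    rw [Multiset.sort_eq, Multiset.sort_eq]

lemma key_lex_aux : ∀ (k : ℕ) (t : Multiset ℝ) (p q p' q' : ℝ), Multiset.count q t = k →
    (∀ y ∈ t, q ≤ y) → q < p → q < p' → q < q' →
    List.Lex (· < ·) ((p ::ₘ q ::ₘ t).sort (· ≤ ·)) ((p' ::ₘ q' ::ₘ t).sort (· ≤ ·)) := by
  intro k
  induction k with
  | zero =>
    intro t p q p' q' hcount ht hp hp' hq'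
    have hqt : q ∉ t := Multiset.count_eq_zero.mp hcount
    have h1 : (p ::ₘ q ::ₘ t) = q ::ₘ p ::ₘ t := Multiset.cons_swap p q t
    have h2 : (q ::ₘ p ::ₘ t).sort (· ≤ ·) = q :: (p ::ₘ t).sort (· ≤ ·) := by
      apply sort_cons_min
      intro y hy
      rcases Multiset.mem_cons.mp hy with rfl | hy
      · exact le_of_lt hp
      · exact ht y hy
    rw [h1, h2]
    rcases hL : (p' ::ₘ q' ::ₘ t).sort (· ≤ ·) with _ | ⟨y, l⟩
    · exfalso
      have := Multiset.length_sort (α := ℝ) (· ≤ ·) (s := p' ::ₘ q' ::ₘ t)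
      rw [hL] at this
      simp at this
    · apply List.Lex.rel
      have hy : y ∈ (p' ::ₘ q' ::ₘ t) := by
        rw [← Multiset.mem_sort (· ≤ ·), hL]; exact List.mem_cons_self
      rcases Multiset.mem_cons.mp hy with rfl | hy
      · exact hp'
      rcases Multiset.mem_cons.mp hy with rfl | hy
      · exact hq'
      · exact lt_of_le_of_ne (ht y hy) (fun h => hqt (h ▸ hy))
  | succ k ih =>
    intro t p q p' q' hcount ht hp hp' hq'
    have hq : q ∈ t := by
      rw [← Multiset.count_pos, hcount]; omega
    have hte : t = q ::ₘ t.erase q := (Multiset.cons_erase hq).symm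
    set t'' := t.erase q with ht''
    have htm : ∀ y ∈ t'', q ≤ y := fun y hy => ht y (Multiset.mem_of_mem_erase hy)
    have hc'' : Multiset.count q t'' = k := by
      have := Multiset.count_erase_self q t
      rw [← ht''] at this; omega
    have e1 : (p ::ₘ q ::ₘ t) = q ::ₘ (p ::ₘ q ::ₘ t'') := by
      rw [hte]
      have : p ::ₘ q ::ₘ q ::ₘ t'' = q ::ₘ p ::ₘ q ::ₘ t'' := Multiset.cons_swap p q _
      exact this
    have e2 : (p' ::ₘ q' ::ₘ t) = q ::ₘ (p' ::ₘ q' ::ₘ t'') := by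
      rw [hte]
      rw [Multiset.cons_swap q' q, Multiset.cons_swap p' q]
    rw [e1, e2]
    have s1 : (q ::ₘ (p ::ₘ q ::ₘ t'')).sort (· ≤ ·) = q :: (p ::ₘ q ::ₘ t'').sort (· ≤ ·) := by
      apply sort_cons_min
      intro y hy
      rcases Multiset.mem_cons.mp hy with rfl | hy
      · exact le_of_lt hp
      rcases Multiset.mem_cons.mp hy with rfl | hy
      · exact le_rfl
      · exact htm y hy
    have s2 : (q ::ₘ (p' ::ₘ q' ::ₘ t'')).sort (· ≤ ·) = q :: (p' ::ₘ q' ::ₘ t'').sort (· ≤ ·) := by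
      apply sort_cons_min
      intro y hy
      rcases Multiset.mem_cons.mp hy with rfl | hy
      · exact le_of_lt hp'
      rcases Multiset.mem_cons.mp hy with rfl | hy
      · exact le_of_lt hq'
      · exact htm y hy
    rw [s1, s2]
    exact List.Lex.cons (ih t'' p q p' q' hc'' htm hp hp' hq')

lemma key_lex (t : Multiset ℝ) (p q p' q' : ℝ) (hp : q < p) (hp' : q < p') (hq' : q < q') :
    List.Lex (· < ·) ((p ::ₘ q ::ₘ t).sort (· ≤ ·)) ((p' ::ₘ q' ::ₘ t).sort (· ≤ ·)) := by
  rw [sort_split q (p ::ₘ q ::ₘ t), sort_split q (p' ::ₘ q' ::ₘ t)]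
  have f1 : Multiset.filter (· < q) (p ::ₘ q ::ₘ t) = Multiset.filter (· < q) t := by
    rw [Multiset.filter_cons_of_neg _ (by simp; exact le_of_lt hp),
        Multiset.filter_cons_of_neg _ (by simp)]
  have f2 : Multiset.filter (· < q) (p' ::ₘ q' ::ₘ t) = Multiset.filter (· < q) t := by
    rw [Multiset.filter_cons_of_neg _ (by simp; exact le_of_lt hp'),
        Multiset.filter_cons_of_neg _ (by simp; exact le_of_lt hq')]
  rw [f1, f2]
  apply lex_append_common
  have g1 : Multiset.filter (fun x => ¬ x < q) (p ::ₘ q ::ₘ t)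
      = p ::ₘ q ::ₘ Multiset.filter (fun x => ¬ x < q) t := by
    rw [Multiset.filter_cons_of_pos _ (by simp; exact le_of_lt hp),
        Multiset.filter_cons_of_pos _ (by simp)]
  have g2 : Multiset.filter (fun x => ¬ x < q) (p' ::ₘ q' ::ₘ t)
      = p' ::ₘ q' ::ₘ Multiset.filter (fun x => ¬ x < q) t := by
    rw [Multiset.filter_cons_of_pos _ (by simp; exact le_of_lt hp'),
        Multiset.filter_cons_of_pos _ (by simp; exact le_of_lt hq')]
  rw [g1, g2]
  apply key_lex_aux (Multiset.count q (Multiset.filter (fun x => ¬ x < q) t)) _ p q p' q' rfl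
    ?_ hp hp' hq'
  intro y hy
  have := (Multiset.mem_filter.mp hy).2
  simpa using this


open Finset

noncomputable section

variable {V : Type*}

lemma master [Fintype V] [DecidableEq V] (G : SimpleGraph V) [DecidableRel G.Adj]
    (D : V → ℝ) (hD : ∀ i, 0 < D i) (d : V → V → ℝ) (hopt : LexOpt G D d)
    {w y z : V} (hz : z ∈ G.neighborFinset w) (hy : 0 < d w y) :
    ratio G D d y ≤ ratio G D d z := by
  by_contra hcon
  push_neg at hcon
  obtain ⟨hnn, hsupp, hsum⟩ := hopt.1
  set ρ := ratio G D d with hρ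
  have hyN : y ∈ G.neighborFinset w := by
    by_contra h
    have : d w y = 0 :=
      hsupp w y (fun hadj => h ((SimpleGraph.mem_neighborFinset G w y).mpr hadj))
    linarith
  have hyz : y ≠ z := fun h => absurd hcon (by rw [h]; exact lt_irrefl _)
  set ε := min (d w y) ((ρ y - ρ z) * D y / 2) with hε
  have hε0 : 0 < ε := lt_min hy (by have := hD y; nlinarith [sub_pos.mpr hcon])
  have hε1 : ε ≤ d w y := min_le_left _ _
  have hε2 : ε / D y < ρ y - ρ z := by
    have h1 : ε ≤ (ρ y - ρ z) * D y / 2 := min_le_right _ _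
    have h2 : 0 < D y := hD y
    rw [div_lt_iff₀ h2]
    nlinarith [sub_pos.mpr hcon]
  set c : V → ℝ := fun v => (if v = y then -ε else 0) + (if v = z then ε else 0) with hc
  have hcy : c y = -ε := by simp [hc, hyz]
  have hcz : c z = ε := by simp [hc, Ne.symm hyz]
  have hco : ∀ v, v ≠ y → v ≠ z → c v = 0 := by
    intro v h1 h2; simp [hc, h1, h2]
  set d' : V → V → ℝ := fun u v => d u v + (if u = w then c v else 0) with hd'
  have hcsum : ∑ v ∈ G.neighborFinset w, c v = 0 := by
    simp only [hc]
    rw [Finset.sum_add_distrib, Finset.sum_ite_eq' (G.neighborFinset w) y (fun _ => -ε),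
      Finset.sum_ite_eq' (G.neighborFinset w) z (fun _ => ε), if_pos hyN, if_pos hz]
    ring
  have halloc' : IsAlloc G D d' := by
    refine ⟨?_, ?_, ?_⟩
    · intro u v
      simp only [hd', hc]
      split_ifs with h1 h2 h3 h3
      · exact absurd (h2.symm.trans h3) hyz
      · have e : d u v = d w y := by rw [h1, h2]
        linarith
      · have := hnn u v
        linarith
      · have := hnn u v
        linarith
      · have := hnn u v
        linarith
    · intro u v huv
      have h1 : v ≠ y ∨ u ≠ w := by
        by_cases hu : u = w
        · subst hu
          left; intro hvy; subst hvy
          exact huv ((SimpleGraph.mem_neighborFinset G u v).mp hyN)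
        · right; exact hu
      have h2 : v ≠ z ∨ u ≠ w := by
        by_cases hu : u = w
        · subst hu
          left; intro hvz; subst hvz
          exact huv ((SimpleGraph.mem_neighborFinset G u v).mp hz)
        · right; exact hu
      simp only [hd']
      rw [hsupp u v huv]
      rcases h1 with h1 | h1
      · rcases h2 with h2 | h2
        · rw [hco v h1 h2]; simp
        · rw [if_neg h2]; ring
      · rw [if_neg h1]; ring
    · intro i
      by_cases hi : i = w
      · simp only [hd']
        have he : ∀ v ∈ G.neighborFinset i, d i v + (if i = w then c v else 0) = d i v + c v :=
          fun v _ => by rw [if_pos hi]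
        rw [Finset.sum_congr rfl he, Finset.sum_add_distrib, hi, hsum w, hcsum]
        ring
      · simp only [hd']
        have he : ∀ v ∈ G.neighborFinset i, d i v + (if i = w then c v else 0) = d i v :=
          fun v _ => by rw [if_neg hi]; ring
        rw [Finset.sum_congr rfl he, hsum i]
  have hwmem : ∀ i, (if w ∈ G.neighborFinset i then c i else 0) = c i ∨ c i = 0 := by
    intro i
    by_cases h : w ∈ G.neighborFinset i
    · left; rw [if_pos h]
    · right
      by_cases h1 : i = y
      · exact absurd (h1 ▸ ((SimpleGraph.mem_neighborFinset G y w).mpr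
          (((SimpleGraph.mem_neighborFinset G w y).mp hyN).symm)) : w ∈ G.neighborFinset i) h
      · by_cases h2 : i = z
        · exact absurd (h2 ▸ ((SimpleGraph.mem_neighborFinset G z w).mpr
            (((SimpleGraph.mem_neighborFinset G w z).mp hz).symm)) : w ∈ G.neighborFinset i) h
        · exact hco i h1 h2
  have hrecv : ∀ i, recv G d' i = recv G d i + c i := by
    intro i
    simp only [recv, hd']
    rw [Finset.sum_add_distrib]
    congr 1
    rw [Finset.sum_ite_eq' (G.neighborFinset i) w (fun _ => c i)]
    rcases hwmem i with h | h
    · exact h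
    · rw [h]; simp
  have hρ'y : ratio G D d' y = ρ y - ε / D y := by
    simp only [ratio, hrecv y, hcy, hρ]
    ring
  have hρ'z : ratio G D d' z = ρ z + ε / D z := by
    simp only [ratio, hrecv z, hcz, hρ]
    ring
  have hρ'o : ∀ u, u ≠ y → u ≠ z → ratio G D d' u = ρ u := by
    intro u h1 h2
    simp only [ratio, hrecv u, hco u h1 h2, hρ]
    ring
  -- multiset decomposition
  have hzin : z ∈ Multiset.erase (univ : Finset V).val y :=
    (Multiset.mem_erase_of_ne (Ne.symm hyz)).mpr (Finset.mem_univ z)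
  have huniv : (univ : Finset V).val
      = y ::ₘ z ::ₘ ((univ : Finset V).val.erase y).erase z := by
    rw [Multiset.cons_erase hzin, Multiset.cons_erase (Finset.mem_univ y)]
  set rest := ((univ : Finset V).val.erase y).erase z with hrest
  have hrestmem : ∀ u ∈ rest, u ≠ y ∧ u ≠ z := by
    intro u hu
    have hnd : ((univ : Finset V).val.erase y).Nodup := (Finset.univ.nodup).erase y
    have h1 := (Multiset.Nodup.mem_erase_iff hnd).mp hu
    have hnd2 : (univ : Finset V).val.Nodup := Finset.univ.nodup
    have h2 := (Multiset.Nodup.mem_erase_iff hnd2).mp h1.2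
    exact ⟨h2.1, h1.1⟩
  have hmap : Multiset.map (ratio G D d') rest = Multiset.map ρ rest := by
    apply Multiset.map_congr rfl
    intro u hu
    exact hρ'o u (hrestmem u hu).1 (hrestmem u hu).2
  have hs1 : sortedRatios G D d = ((ρ y) ::ₘ (ρ z) ::ₘ Multiset.map ρ rest).sort (· ≤ ·) := by
    simp only [sortedRatios]
    rw [huniv, Multiset.map_cons, Multiset.map_cons]
  have hs2 : sortedRatios G D d'
      = ((ratio G D d' y) ::ₘ (ratio G D d' z) ::ₘ Multiset.map ρ rest).sort (· ≤ ·) := by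
    simp only [sortedRatios]
    rw [huniv, Multiset.map_cons, Multiset.map_cons, hmap]
  have hlex : List.Lex (· < ·) (sortedRatios G D d) (sortedRatios G D d') := by
    rw [hs1, hs2, hρ'y, hρ'z]
    apply key_lex
    · exact hcon
    · have := hD y
      linarith [hε2]
    · have : 0 < ε / D z := div_pos hε0 (hD z)
      linarith
  exact hopt.2 d' halloc' hlex

lemma nbr_swap [Fintype V] [DecidableEq V] (G : SimpleGraph V) [DecidableRel G.Adj]
    (F : V → V → ℝ) (S : Finset V) :
    ∑ a ∈ S, ∑ j ∈ G.neighborFinset a, F a j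
      = ∑ j ∈ univ, ∑ a ∈ (G.neighborFinset j).filter (· ∈ S), F a j := by
  have h1 : ∑ a ∈ S, ∑ j ∈ G.neighborFinset a, F a j
      = ∑ a ∈ S, ∑ j ∈ univ, if G.Adj a j then F a j else 0 := by
    refine Finset.sum_congr rfl fun a _ => ?_
    rw [SimpleGraph.neighborFinset_eq_filter, Finset.sum_filter]
  rw [h1, Finset.sum_comm]
  refine Finset.sum_congr rfl fun j _ => ?_
  rw [← Finset.sum_filter]
  refine Finset.sum_congr ?_ fun a _ => rfl
  ext a
  simp only [Finset.mem_filter, SimpleGraph.mem_neighborFinset]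
  rw [G.adj_comm]
  exact and_comm

lemma flow_le_recv [Fintype V] [DecidableEq V] (G : SimpleGraph V) [DecidableRel G.Adj]
    (D : V → ℝ) (d : V → V → ℝ) (hnn : ∀ i j, 0 ≤ d i j)
    (hsum : ∀ i, ∑ j ∈ G.neighborFinset i, d i j = D i) (A B : Finset V)
    (hT : ∀ x ∈ A, ∀ y, 0 < d x y → y ∈ B) :
    ∑ x ∈ A, D x ≤ ∑ y ∈ B, recv G d y := by
  calc ∑ x ∈ A, D x = ∑ x ∈ A, ∑ j ∈ G.neighborFinset x, d x j :=
        Finset.sum_congr rfl fun x _ => (hsum x).symm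
    _ = ∑ j ∈ univ, ∑ x ∈ (G.neighborFinset j).filter (· ∈ A), d x j :=
        nbr_swap G (fun x j => d x j) A
    _ = ∑ j ∈ B, ∑ x ∈ (G.neighborFinset j).filter (· ∈ A), d x j := by
        symm
        apply Finset.sum_subset (Finset.subset_univ B)
        intro j _ hjB
        apply Finset.sum_eq_zero
        intro x hx
        obtain ⟨hxN, hxA⟩ := Finset.mem_filter.mp hx
        by_contra hne
        have hpos : 0 < d x j := lt_of_le_of_ne (hnn x j) (Ne.symm hne)
        exact hjB (hT x hxA j hpos)
    _ ≤ ∑ j ∈ B, ∑ x ∈ G.neighborFinset j, d x j :=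
        Finset.sum_le_sum fun j _ => Finset.sum_le_sum_of_subset_of_nonneg
          (Finset.filter_subset _ _) (fun x _ _ => hnn x j)
    _ = ∑ j ∈ B, recv G d j := rfl

lemma recv_le_flow [Fintype V] [DecidableEq V] (G : SimpleGraph V) [DecidableRel G.Adj]
    (D : V → ℝ) (d : V → V → ℝ) (hnn : ∀ i j, 0 ≤ d i j)
    (hsum : ∀ i, ∑ j ∈ G.neighborFinset i, d i j = D i) (A B : Finset V)
    (hS : ∀ x ∈ A, ∀ j, 0 < d j x → j ∈ B) :
    ∑ x ∈ A, recv G d x ≤ ∑ j ∈ B, D j := by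
  calc ∑ x ∈ A, recv G d x = ∑ x ∈ A, ∑ j ∈ G.neighborFinset x, d j x := rfl
    _ = ∑ j ∈ univ, ∑ x ∈ (G.neighborFinset j).filter (· ∈ A), d j x :=
        nbr_swap G (fun x j => d j x) A
    _ = ∑ j ∈ B, ∑ x ∈ (G.neighborFinset j).filter (· ∈ A), d j x := by
        symm
        apply Finset.sum_subset (Finset.subset_univ B)
        intro j _ hjB
        apply Finset.sum_eq_zero
        intro x hx
        obtain ⟨hxN, hxA⟩ := Finset.mem_filter.mp hx
        by_contra hne
        have hpos : 0 < d j x := lt_of_le_of_ne (hnn j x) (Ne.symm hne)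
        exact hjB (hS x hxA j hpos)
    _ ≤ ∑ j ∈ B, ∑ x ∈ G.neighborFinset j, d j x :=
        Finset.sum_le_sum fun j _ => Finset.sum_le_sum_of_subset_of_nonneg
          (Finset.filter_subset _ _) (fun x _ _ => hnn j x)
    _ = ∑ j ∈ B, D j := Finset.sum_congr rfl fun j _ => hsum j

theorem stmt11 [Fintype V] [Nonempty V] [DecidableEq V] (G : SimpleGraph V) [DecidableRel G.Adj]
    (hconn : G.Connected) (D : V → ℝ) (hD : ∀ i, 0 < D i) (d : V → V → ℝ)
    (hopt : LexOpt G D d) (hK : ∃ i j, ratio G D d i ≠ ratio G D d j) :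
    ∑ i ∈ minSet G D d, recv G d i = ∑ i ∈ maxSet G D d, D i := by
  obtain ⟨hnn, hsupp, hsum⟩ := hopt.1
  set ρ := ratio G D d with hρ
  -- every node has a neighbor
  have hnbr : ∀ v : V, (G.neighborFinset v).Nonempty := by
    intro v
    obtain ⟨i, j, hij⟩ := hK
    have hne : ∃ u : V, u ≠ v := by
      by_cases h : i = v
      · exact ⟨j, fun hjv => hij (by rw [h, hjv])⟩
      · exact ⟨i, h⟩
    obtain ⟨u, hu⟩ := hne
    obtain ⟨p⟩ := hconn.preconnected v u
    cases p with
    | nil => exact absurd rfl hu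
    | cons h q => exact ⟨_, (SimpleGraph.mem_neighborFinset G v _).mpr h⟩
  have hmemN : ∀ {w y : V}, 0 < d w y → y ∈ G.neighborFinset w := by
    intro w y hy
    by_contra h
    have : d w y = 0 :=
      hsupp w y (fun hadj => h ((SimpleGraph.mem_neighborFinset G w y).mpr hadj))
    linarith
  have hsymN : ∀ {w y : V}, y ∈ G.neighborFinset w → w ∈ G.neighborFinset y := by
    intro w y hy
    rw [SimpleGraph.mem_neighborFinset] at hy ⊢
    exact hy.symm
  set φ : V → ℝ := fun w => (G.neighborFinset w).inf' (hnbr w) ρ with hφ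
  have hφ_le : ∀ w z, z ∈ G.neighborFinset w → φ w ≤ ρ z := fun w z hz => Finset.inf'_le _ hz
  have hφ_mem : ∀ w, ∃ z ∈ G.neighborFinset w, φ w = ρ z := fun w =>
    Finset.exists_mem_eq_inf' (hnbr w) ρ
  have hmaster : ∀ w y, 0 < d w y → ρ y = φ w := by
    intro w y hy
    refine le_antisymm ?_ (hφ_le w y (hmemN hy))
    apply Finset.le_inf'
    intro z hz
    exact master G D hD d hopt hz hy
  have hsend : ∀ w, ∃ y, 0 < d w y := by
    intro w
    by_contra h
    push_neg at h
    have h0 : ∑ j ∈ G.neighborFinset w, d w j = 0 :=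
      Finset.sum_eq_zero fun j _ => le_antisymm (h j) (hnn w j)
    rw [hsum w] at h0
    exact absurd h0 (hD w).ne'
  have hrecv_pos : ∀ w y, 0 < d w y → 0 < recv G d y := by
    intro w y hy
    have hwy : w ∈ G.neighborFinset y := hsymN (hmemN hy)
    have hle : d w y ≤ ∑ j ∈ G.neighborFinset y, d j y :=
      Finset.single_le_sum (fun j _ => hnn j y) hwy
    unfold recv
    linarith
  have hφpos : ∀ w, 0 < φ w := by
    intro w
    obtain ⟨y, hy⟩ := hsend w
    rw [← hmaster w y hy, hρ]
    exact div_pos (hrecv_pos w y hy) (hD y)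
  have hρpos : ∀ x, 0 < ρ x := by
    intro x
    obtain ⟨z, hzN⟩ := hnbr x
    exact lt_of_lt_of_le (hφpos z) (hφ_le z x (hsymN hzN))
  have hrecvD : ∀ i, recv G d i = ρ i * D i := by
    intro i
    rw [hρ]
    simp only [ratio]
    rw [div_mul_cancel₀ _ (hD i).ne']
  set h : V → ℝ := fun x => ρ x * φ x with hh
  have hdec : ∀ w x, 0 < d w x → h x ≤ h w := by
    intro w x hdwx
    have h1 : ρ x = φ w := hmaster w x hdwx
    have h2 : φ x ≤ ρ w := hφ_le x w (hsymN (hmemN hdwx))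
    calc ρ x * φ x = φ w * φ x := by rw [h1]
      _ ≤ φ w * ρ w := mul_le_mul_of_nonneg_left h2 (hφpos w).le
      _ = ρ w * φ w := by ring
  -- min part : 1 ≤ h x for all x
  have hminh : ∀ x, 1 ≤ h x := by
    obtain ⟨x0, _, hx0⟩ := Finset.exists_min_image univ h univ_nonempty
    set r := ρ x0 with hr
    set q := φ x0 with hq
    set A := univ.filter (fun x => ρ x = r ∧ φ x = q) with hA
    set B := univ.filter (fun x => ρ x = q ∧ φ x = r) with hB
    have hqpos : 0 < q := hφpos x0
    have hrpos : 0 < r := hρpos x0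
    have htargetsA : ∀ x ∈ A, ∀ y, 0 < d x y → y ∈ B := by
      intro x hx y hdxy
      obtain ⟨hxr, hxq⟩ := (Finset.mem_filter.mp hx).2
      have h1 : ρ y = q := by rw [← hxq]; exact hmaster x y hdxy
      have h2 : φ y ≤ r := by rw [← hxr]; exact hφ_le y x (hsymN (hmemN hdxy))
      have h3 : r ≤ φ y := by
        have hy0 := hx0 y (Finset.mem_univ y)
        have : r * q ≤ ρ y * φ y := hy0
        rw [h1] at this
        nlinarith
      exact Finset.mem_filter.mpr ⟨Finset.mem_univ y, h1, le_antisymm h2 h3⟩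
    have htargetsB : ∀ x ∈ B, ∀ y, 0 < d x y → y ∈ A := by
      intro x hx y hdxy
      obtain ⟨hxq, hxr⟩ := (Finset.mem_filter.mp hx).2
      have h1 : ρ y = r := by rw [← hxr]; exact hmaster x y hdxy
      have h2 : φ y ≤ q := by rw [← hxq]; exact hφ_le y x (hsymN (hmemN hdxy))
      have h3 : q ≤ φ y := by
        have hy0 := hx0 y (Finset.mem_univ y)
        have : r * q ≤ ρ y * φ y := hy0
        rw [h1] at this
        nlinarith
      exact Finset.mem_filter.mpr ⟨Finset.mem_univ y, h1, le_antisymm h2 h3⟩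
    have hAB : ∑ x ∈ A, D x ≤ q * ∑ y ∈ B, D y := by
      have := flow_le_recv G D d hnn hsum A B htargetsA
      calc ∑ x ∈ A, D x ≤ ∑ y ∈ B, recv G d y := this
        _ = ∑ y ∈ B, q * D y := by
            apply Finset.sum_congr rfl
            intro y hy
            rw [hrecvD y, (Finset.mem_filter.mp hy).2.1]
        _ = q * ∑ y ∈ B, D y := by rw [Finset.mul_sum]
    have hBA : ∑ x ∈ B, D x ≤ r * ∑ y ∈ A, D y := by
      have := flow_le_recv G D d hnn hsum B A htargetsB
      calc ∑ x ∈ B, D x ≤ ∑ y ∈ A, recv G d y := this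
        _ = ∑ y ∈ A, r * D y := by
            apply Finset.sum_congr rfl
            intro y hy
            rw [hrecvD y, (Finset.mem_filter.mp hy).2.1]
        _ = r * ∑ y ∈ A, D y := by rw [Finset.mul_sum]
    have hApos : 0 < ∑ x ∈ A, D x := by
      have hx0A : x0 ∈ A := Finset.mem_filter.mpr ⟨Finset.mem_univ x0, rfl, rfl⟩
      have := Finset.single_le_sum (f := D) (fun x _ => (hD x).le) hx0A
      linarith [hD x0]
    have hBpos : 0 < ∑ x ∈ B, D x := by nlinarith
    have hrq : 1 ≤ r * q := by nlinarith
    intro x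
    calc (1 : ℝ) ≤ r * q := hrq
      _ ≤ h x := hx0 x (Finset.mem_univ x)
  -- max part : h x ≤ 1 for all x
  have hmaxh : ∀ x, h x ≤ 1 := by
    obtain ⟨x1, _, hx1⟩ := Finset.exists_max_image univ h univ_nonempty
    set r := ρ x1 with hr
    set q := φ x1 with hq
    set A := univ.filter (fun x => ρ x = r ∧ φ x = q) with hA
    set B := univ.filter (fun x => ρ x = q ∧ φ x = r) with hB
    have hqpos : 0 < q := hφpos x1
    have hrpos : 0 < r := hρpos x1
    have hsendersA : ∀ x ∈ A, ∀ w, 0 < d w x → w ∈ B := by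
      intro x hx w hdwx
      obtain ⟨hxr, hxq⟩ := (Finset.mem_filter.mp hx).2
      have h1 : φ w = r := by rw [← hxr]; exact (hmaster w x hdwx).symm
      have h2 : h x ≤ h w := hdec w x hdwx
      have h3 : h w ≤ r * q := by
        have := hx1 w (Finset.mem_univ w)
        calc h w ≤ h x1 := this
          _ = r * q := rfl
      have h4 : r * q ≤ h w := by
        calc r * q = ρ x * φ x := by rw [hxr, hxq]
          _ ≤ h w := h2
      have h5 : ρ w * r = r * q := by
        have : h w = r * q := le_antisymm h3 h4
        rw [← this, hh]
        simp only []
        rw [h1]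
      have h6 : ρ w = q := by
        have hr0 : r ≠ 0 := hrpos.ne'
        field_simp at h5
        nlinarith [h5]
      exact Finset.mem_filter.mpr ⟨Finset.mem_univ w, h6, h1⟩
    have hsendersB : ∀ x ∈ B, ∀ w, 0 < d w x → w ∈ A := by
      intro x hx w hdwx
      obtain ⟨hxq, hxr⟩ := (Finset.mem_filter.mp hx).2
      have h1 : φ w = q := by rw [← hxq]; exact (hmaster w x hdwx).symm
      have h2 : h x ≤ h w := hdec w x hdwx
      have h3 : h w ≤ r * q := hx1 w (Finset.mem_univ w)
      have h4 : r * q ≤ h w := by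
        calc r * q = q * r := by ring
          _ = ρ x * φ x := by rw [hxq, hxr]
          _ ≤ h w := h2
      have h5 : ρ w * q = r * q := by
        have : h w = r * q := le_antisymm h3 h4
        rw [← this, hh]
        simp only []
        rw [h1]
      have h6 : ρ w = r := by
        have hq0 : q ≠ 0 := hqpos.ne'
        exact mul_right_cancel₀ hq0 h5
      exact Finset.mem_filter.mpr ⟨Finset.mem_univ w, h6, h1⟩
    have hAB : r * ∑ x ∈ A, D x ≤ ∑ y ∈ B, D y := by
      have := recv_le_flow G D d hnn hsum A B hsendersA
      calc r * ∑ x ∈ A, D x = ∑ x ∈ A, r * D x := by rw [Finset.mul_sum]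
        _ = ∑ x ∈ A, recv G d x := by
            apply Finset.sum_congr rfl
            intro x hx
            rw [hrecvD x, (Finset.mem_filter.mp hx).2.1]
        _ ≤ ∑ y ∈ B, D y := this
    have hBA : q * ∑ x ∈ B, D x ≤ ∑ y ∈ A, D y := by
      have := recv_le_flow G D d hnn hsum B A hsendersB
      calc q * ∑ x ∈ B, D x = ∑ x ∈ B, q * D x := by rw [Finset.mul_sum]
        _ = ∑ x ∈ B, recv G d x := by
            apply Finset.sum_congr rfl
            intro x hx
            rw [hrecvD x, (Finset.mem_filter.mp hx).2.1]
        _ ≤ ∑ y ∈ A, D y := this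
    have hApos : 0 < ∑ x ∈ A, D x := by
      have hx1A : x1 ∈ A := Finset.mem_filter.mpr ⟨Finset.mem_univ x1, rfl, rfl⟩
      have := Finset.single_le_sum (f := D) (fun x _ => (hD x).le) hx1A
      linarith [hD x1]
    have hBpos : 0 < ∑ x ∈ B, D x := by nlinarith
    have hrq : r * q ≤ 1 := by nlinarith
    intro x
    calc h x ≤ h x1 := hx1 x (Finset.mem_univ x)
      _ = r * q := rfl
      _ ≤ 1 := hrq
  have hone : ∀ x, ρ x * φ x = 1 := fun x => le_antisymm (hmaxh x) (hminh x)
  -- endgame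
  set m := minRatio G D d with hm
  set M := maxRatio G D d with hM
  have hmval : ∃ a, ρ a = m := by
    obtain ⟨a, _, ha⟩ := Finset.exists_mem_eq_inf' (univ_nonempty (α := V)) ρ
    exact ⟨a, ha.symm⟩
  have hMval : ∃ b, ρ b = M := by
    obtain ⟨b, _, hb⟩ := Finset.exists_mem_eq_sup' (univ_nonempty (α := V)) ρ
    exact ⟨b, hb.symm⟩
  have hmle : ∀ x, m ≤ ρ x := fun x => Finset.inf'_le_of_le _ (Finset.mem_univ x) le_rfl
  have hMle : ∀ x, ρ x ≤ M := fun x => Finset.le_sup'_of_le _ (Finset.mem_univ x) le_rfl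
  obtain ⟨a, ha⟩ := hmval
  obtain ⟨b, hb⟩ := hMval
  have hmpos : 0 < m := ha ▸ hρpos a
  have hMpos : 0 < M := hb ▸ hρpos b
  have hmM : m * M = 1 := by
    have h1 : 1 ≤ m * M := by
      obtain ⟨z, hzN, hz⟩ := hφ_mem a
      have : φ a ≤ M := hz ▸ hMle z
      have he := hone a
      rw [ha] at he
      nlinarith
    have h2 : m * M ≤ 1 := by
      obtain ⟨z, hzN, hz⟩ := hφ_mem b
      have : m ≤ φ b := hz ▸ hmle z
      have he := hone b
      rw [hb] at he
      nlinarith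
    linarith
  -- final computation
  have hfinal : ∑ i ∈ minSet G D d, recv G d i
      = ∑ j ∈ univ, ∑ i ∈ (G.neighborFinset j).filter (· ∈ minSet G D d), d j i := by
    exact nbr_swap G (fun i j => d j i) (minSet G D d)
  rw [hfinal]
  have hper : ∀ j, ∑ i ∈ (G.neighborFinset j).filter (· ∈ minSet G D d), d j i
      = if j ∈ maxSet G D d then D j else 0 := by
    intro j
    by_cases hj : j ∈ maxSet G D d
    · rw [if_pos hj]
      have hjM : ρ j = M := (Finset.mem_filter.mp hj).2
      have hφj : φ j = m := by
        have he := hone j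
        rw [hjM] at he
        have : M * φ j = M * m := by rw [he]; linarith [hmM, mul_comm m M]
        exact mul_left_cancel₀ hMpos.ne' this
      rw [← hsum j]
      apply Finset.sum_subset (Finset.filter_subset _ _)
      intro x hx hxn
      by_contra hne
      have hpos : 0 < d j x := lt_of_le_of_ne (hnn j x) (Ne.symm hne)
      have hxm : ρ x = m := by rw [hmaster j x hpos, hφj]
      exact hxn (Finset.mem_filter.mpr ⟨hx,
        Finset.mem_filter.mpr ⟨Finset.mem_univ x, hxm⟩⟩)
    · rw [if_neg hj]
      apply Finset.sum_eq_zero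
      intro x hx
      obtain ⟨hxN, hxmin⟩ := Finset.mem_filter.mp hx
      by_contra hne
      have hpos : 0 < d j x := lt_of_le_of_ne (hnn j x) (Ne.symm hne)
      have hxm : ρ x = m := (Finset.mem_filter.mp hxmin).2
      have hφjm : φ j = m := by rw [← hxm]; exact (hmaster j x hpos).symm
      have hjM : ρ j = M := by
        have he := hone j
        rw [hφjm] at he
        have h2 : ρ j * m = M * m := by rw [he]; linarith [hmM, mul_comm m M]
        exact mul_right_cancel₀ hmpos.ne' h2
      exact hj (Finset.mem_filter.mpr ⟨Finset.mem_univ j, hjM⟩)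
  rw [Finset.sum_congr rfl (fun j _ => hper j)]
  rw [Finset.sum_ite_mem]
  congr 1
  exact Finset.univ_inter _
end
end

section
/- Suppose an allocation d̄ has at least two distinct exchange ratio levels, its minimum-ratio set L̄_1 is an independent set, and ∑_{i∈L̄_1} r̄_i = ∑_{i∈N(L̄_1)} D_i. Then any allocation d̂ maximizing min_j r_j/D_j satisfies L̄_1 ⊆ L̂_1 and achieves the same minimum ratio: min_j r̂_j/D_j = min_j r̄_j/D_j. -/
open Finset

noncomputable section

variable {V : Type*}

theorem stmt13 [Fintype V] [Nonempty V] [DecidableEq V] (G : SimpleGraph V) [DecidableRel G.Adj]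
    (hconn : G.Connected) (D : V → ℝ) (hD : ∀ i, 0 < D i)
    (dbar : V → V → ℝ) (hbar : IsAlloc G D dbar)
    (hK : ∃ i j, ratio G D dbar i ≠ ratio G D dbar j)
    (hind : ∀ i ∈ minSet G D dbar, ∀ j ∈ minSet G D dbar, ¬ G.Adj i j)
    (hsum : ∑ i ∈ minSet G D dbar, recv G dbar i = ∑ i ∈ extNbhd G (minSet G D dbar), D i)
    (dhat : V → V → ℝ) (hhat : IsAlloc G D dhat)
    (hmax : ∀ d', IsAlloc G D d' → minRatio G D d' ≤ minRatio G D dhat) :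
    minSet G D dbar ⊆ minSet G D dhat ∧ minRatio G D dhat = minRatio G D dbar := by
  classical
  set L := minSet G D dbar with hL
  set m := minRatio G D dbar with hm
  have hnbr : ∀ i ∈ L, G.neighborFinset i ⊆ extNbhd G L := by
    intro i hi j hj
    rw [SimpleGraph.mem_neighborFinset] at hj
    have hjL : j ∉ L := fun hjL => hind i hi j hjL hj
    refine Finset.mem_sdiff.mpr ⟨Finset.mem_biUnion.mpr ⟨i, hi, ?_⟩, hjL⟩
    rwa [SimpleGraph.mem_neighborFinset]
  have key : ∀ d, IsAlloc G D d → ∑ i ∈ L, recv G d i ≤ ∑ j ∈ extNbhd G L, D j := by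
    intro d hd
    obtain ⟨hpos, hsupp, hdist⟩ := hd
    have h1 : ∑ i ∈ L, recv G d i ≤ ∑ i ∈ L, ∑ j ∈ extNbhd G L, d j i := by
      refine Finset.sum_le_sum fun i hi => ?_
      exact Finset.sum_le_sum_of_subset_of_nonneg (hnbr i hi) (fun j _ _ => hpos j i)
    rw [Finset.sum_comm] at h1
    refine h1.trans (Finset.sum_le_sum fun j _ => ?_)
    have h2 : ∑ i ∈ L, d j i ≤ ∑ i ∈ Finset.univ, d j i :=
      Finset.sum_le_sum_of_subset_of_nonneg (Finset.subset_univ L) (fun i _ _ => hpos j i)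
    refine h2.trans ?_
    have h3 : ∑ i ∈ G.neighborFinset j, d j i = ∑ i ∈ Finset.univ, d j i :=
      Finset.sum_subset (Finset.subset_univ _) (fun i _ hi =>
        hsupp j i (fun h => hi ((SimpleGraph.mem_neighborFinset G j i).mpr h)))
    rw [← h3, hdist j]
  have hLne : L.Nonempty := by
    obtain ⟨i, _, hi⟩ := Finset.exists_mem_eq_inf' (Finset.univ_nonempty) (ratio G D dbar)
    exact ⟨i, Finset.mem_filter.mpr ⟨Finset.mem_univ i, hi.symm⟩⟩
  have hrecv_bar : ∀ i ∈ L, recv G dbar i = m * D i := by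
    intro i hi
    have h := (Finset.mem_filter.mp hi).2
    rw [show ratio G D dbar i = recv G dbar i / D i from rfl,
      div_eq_iff (hD i).ne'] at h
    exact h
  have hsum' : ∑ j ∈ extNbhd G L, D j = m * ∑ i ∈ L, D i := by
    rw [← hsum, Finset.mul_sum]
    exact Finset.sum_congr rfl hrecv_bar
  have hlow : ∀ i, m ≤ ratio G D dhat i := fun i =>
    (hmax dbar hbar).trans (Finset.inf'_le _ (Finset.mem_univ i))
  have hrecv_hat : ∀ i, recv G dhat i = ratio G D dhat i * D i := fun i => by
    rw [show ratio G D dhat i = recv G dhat i / D i from rfl, div_mul_cancel₀ _ (hD i).ne']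
  have hub : ∑ i ∈ L, ratio G D dhat i * D i ≤ ∑ i ∈ L, m * D i := by
    rw [← Finset.mul_sum, ← hsum']
    calc ∑ i ∈ L, ratio G D dhat i * D i = ∑ i ∈ L, recv G dhat i :=
          Finset.sum_congr rfl (fun i _ => (hrecv_hat i).symm)
      _ ≤ _ := key dhat hhat
  have hlb : ∀ i ∈ L, m * D i ≤ ratio G D dhat i * D i := fun i _ =>
    mul_le_mul_of_nonneg_right (hlow i) (hD i).le
  have hsums : ∑ i ∈ L, m * D i = ∑ i ∈ L, ratio G D dhat i * D i :=
    le_antisymm (Finset.sum_le_sum hlb) hub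
  have heq : ∀ i ∈ L, ratio G D dhat i = m := by
    intro i hi
    have h := ((Finset.sum_eq_sum_iff_of_le hlb).mp hsums) i hi
    exact mul_right_cancel₀ (hD i).ne' h.symm
  obtain ⟨i0, hi0⟩ := hLne
  have hminhat : minRatio G D dhat = m := by
    refine le_antisymm ?_ (hmax dbar hbar)
    calc minRatio G D dhat ≤ ratio G D dhat i0 := Finset.inf'_le _ (Finset.mem_univ i0)
      _ = m := heq i0 hi0
  refine ⟨fun i hi => Finset.mem_filter.mpr ⟨Finset.mem_univ i, by rw [heq i hi, hminhat]⟩, hminhat⟩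
end
end
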